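/- arXiv:2410.16661 — 4 statements merged into one kernel-verified Lean document; each statement's English description precedes it below -/
import Mathlib

section
/- Let n ≥ 1 and s ∈ (0,1). There exists a constant C = C(n,s) such that for every bounded Lipschitz function u : ℝⁿ → ℝ, the function 𝔤(x) = c_{n,s/2} ∫_{ℝⁿ} (u(x) − u(x+z))/|z|^{n+s} dz satisfies |𝔤(x) − 𝔤(y)| ≤ C‖u‖_{C^{0,1}(ℝⁿ)} |x−y|^{1−s} for all x, y ∈ ℝⁿ; that is, 𝔤 = (−Δ)^{s/2}u belongs to C^{1−s}(ℝⁿ) with ‖𝔤‖_{C^{1−s}(ℝⁿ)} ≤ C‖u‖_{C^{0,1}(ℝⁿ)}. -/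
open MeasureTheory Real Set Metric Bornology Filter
open scoped RealInnerProductSpace ENNReal NNReal Pointwise

noncomputable section

abbrev En (n : ℕ) : Type := EuclideanSpace ℝ (Fin n)

/-- The normalizing constant `c_{n,s}`. -/
def cK (n : ℕ) (s : ℝ) : ℝ :=
  s * (2 : ℝ) ^ (2 * s) * Real.Gamma (((n : ℝ) + 2 * s) / 2) /
    (Real.pi ^ ((n : ℝ) / 2) * Real.Gamma (1 - s))

/-- The fractional Laplacian `(-Δ)ˢ u (x)`. -/
def fracLap (n : ℕ) (s : ℝ) (u : En n → ℝ) (x : En n) : ℝ :=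
  (cK n s / 2) * ∫ y : En n, (2 * u x - u (x + y) - u (x - y)) / ‖y‖ ^ ((n : ℝ) + 2 * s)

/-- `(-Δ)^{s/2} u (x)`, defined via the non-symmetrized integral. -/
def fracHalf (n : ℕ) (s : ℝ) (u : En n → ℝ) (x : En n) : ℝ :=
  cK n (s / 2) * ∫ z : En n, (u x - u (x + z)) / ‖z‖ ^ ((n : ℝ) + s)

/-- The squared Gagliardo-type seminorm `[u]_s²`. -/
def seminormSsq (n : ℕ) (s : ℝ) (u : En n → ℝ) : ℝ :=
  (cK n s / 2) * ∫ p : En n × En n, (u p.1 - u p.2) ^ 2 / ‖p.1 - p.2‖ ^ ((n : ℝ) + 2 * s)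

/-- The squared seminorm `[u]₁² = ∫_Ω |∇u|²`. -/
def seminorm1sq (n : ℕ) (Ω : Set (En n)) (u : En n → ℝ) : ℝ :=
  ∫ x in Ω, ‖gradient u x‖ ^ 2

/-- The Laplacian as the trace of the Hessian. -/
def lap (n : ℕ) (u : En n → ℝ) (x : En n) : ℝ :=
  ∑ i : Fin n, fderiv ℝ (fun y => fderiv ℝ u y (EuclideanSpace.single i 1)) x
    (EuclideanSpace.single i 1)

/-- The Hessian `D²u(x)` as a continuous bilinear-type map; `‖hess n u x‖` is its operator
norm. -/
def hess (n : ℕ) (u : En n → ℝ) (x : En n) : En n →L[ℝ] En n →L[ℝ] ℝ :=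
  fderiv ℝ (fderiv ℝ u) x

/-- A bounded C² domain `Ω ⊆ ℝⁿ`: a bounded open connected set whose boundary is a C²
hypersurface, described by a global C² defining function with nonvanishing gradient
on the boundary. -/
structure C2Domain (n : ℕ) where
  carrier : Set (En n)
  phi : En n → ℝ
  phi_smooth : ContDiff ℝ 2 phi
  carrier_eq : carrier = {x | phi x < 0}
  grad_ne : ∀ x ∈ frontier carrier, gradient phi x ≠ 0
  bounded : IsBounded carrier
  connected : IsConnected carrier

/-- The outward unit normal `ν` on `∂Ω`. -/
def C2Domain.nu {n : ℕ} (D : C2Domain n) (x : En n) : En n :=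
  ‖gradient D.phi x‖⁻¹ • gradient D.phi x

/-- The normal derivative `∂u/∂ν` at a boundary point (the derivative from inside). -/
def normalDeriv {n : ℕ} (D : C2Domain n) (u : En n → ℝ) (x : En n) : ℝ :=
  fderivWithin ℝ u (closure D.carrier) x (D.nu x)

/-- `Ω` is strictly star-shaped with respect to `z₀`. -/
def C2Domain.StrictlyStarShapedAt {n : ℕ} (D : C2Domain n) (z₀ : En n) : Prop :=
  z₀ ∈ D.carrier ∧ ∀ x ∈ frontier D.carrier, 0 < ⟪x - z₀, D.nu x⟫

/-- `Ω` is strictly star-shaped. -/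
def C2Domain.StrictlyStarShaped {n : ℕ} (D : C2Domain n) : Prop :=
  ∃ z₀, D.StrictlyStarShapedAt z₀

/-- The Pohozaev boundary term `∫_{∂Ω} (∂u/∂ν)² (x·ν(x)) dS`, with `dS` the
`(n-1)`-dimensional Hausdorff measure on `∂Ω`. -/
def pohozaevBoundary {n : ℕ} (D : C2Domain n) (u : En n → ℝ) : ℝ :=
  ∫ x in frontier D.carrier, (normalDeriv D u x) ^ 2 * ⟪x, D.nu x⟫ ∂ μH[(n : ℝ) - 1]

/-- Condition (★). -/
def StarCond (n : ℕ) (s : ℝ) (Ω : Set (En n)) (u : En n → ℝ) : Prop :=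
  ∃ C > 0, ∃ γ ∈ Set.Ioo (0:ℝ) 1, ∀ x ∈ Ω,
    ‖hess n u x‖ ≤ C * infDist x (frontier Ω) ^ (γ - 1) ∧
    |u x| ≤ C * infDist x (frontier Ω) ∧
    |fracLap n s u x| ≤ C * (1 + (if s < 1/2 then 1 else 0)
      + (if s = 1/2 then |Real.log (infDist x (frontier Ω))| else 0)
      + (if 1/2 < s then infDist x (frontier Ω) ^ (1 - 2*s) else 0))


lemma en_nontrivial {n : ℕ} (hn : 1 ≤ n) : Nontrivial (En n) := by
  refine nontrivial_of_ne (EuclideanSpace.single ⟨0, hn⟩ 1) 0 ?_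
  intro h
  have := congrArg (fun v => ‖v‖) h
  simp [EuclideanSpace.norm_single] at this

lemma integrable_comp_norm {n : ℕ} (hn : 1 ≤ n) {f : ℝ → ℝ}
    (hint : IntegrableOn (fun y => y ^ (n - 1 : ℕ) * f y) (Ioi (0:ℝ))) :
    Integrable (fun x : En n => f ‖x‖) := by
  haveI : Nontrivial (En n) := en_nontrivial hn
  have hdim : Module.finrank ℝ (En n) = n := finrank_euclideanSpace_fin
  rw [← restrict_compl_singleton (μ := (volume : Measure (En n))) (0 : En n),
    ← map_comap_subtype_coe (MeasurableSet.compl (measurableSet_singleton (0:En n))),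
    (MeasurableEmbedding.subtype_coe (MeasurableSet.compl (measurableSet_singleton (0:En n)))).integrable_map_iff]
  have key := ((volume : Measure (En n)).measurePreserving_homeomorphUnitSphereProd).integrable_comp_emb
      (f := (homeomorphUnitSphereProd (En n))) (Homeomorph.measurableEmbedding _)
      (g := (f ∘ Subtype.val ∘ Prod.snd : (sphere (0:En n) 1 × Ioi (0:ℝ)) → ℝ))
  rw [show ((fun x : En n => f ‖x‖) ∘ (Subtype.val : ({0}ᶜ : Set (En n)) → En n))
      = (f ∘ Subtype.val ∘ Prod.snd) ∘ (homeomorphUnitSphereProd (En n)) from by funext x; simp]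
  rw [key]
  have hI : Integrable (f ∘ Subtype.val : Ioi (0:ℝ) → ℝ)
      (Measure.volumeIoiPow (Module.finrank ℝ (En n) - 1)) := by
    rw [Measure.volumeIoiPow, integrable_withDensity_iff]
    rotate_left
    · exact (measurable_subtype_coe.pow_const _).ennreal_ofReal
    · exact Eventually.of_forall fun x => ENNReal.ofReal_lt_top
    · have h2 : Integrable ((fun y : ℝ =>
          f y * (ENNReal.ofReal (y ^ (Module.finrank ℝ (En n) - 1))).toReal) ∘
          (Subtype.val : Ioi (0:ℝ) → ℝ)) (Measure.comap Subtype.val volume) := by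
        rw [← (MeasurableEmbedding.subtype_coe measurableSet_Ioi).integrable_map_iff,
          map_comap_subtype_coe measurableSet_Ioi]
        refine (hint.congr_fun (fun y hy => ?_) measurableSet_Ioi)
        rw [ENNReal.toReal_ofReal (pow_nonneg (le_of_lt hy) _), hdim, mul_comm]
      exact h2
  simpa [Function.comp_def] using (integrable_const (1:ℝ)).mul_prod hI

lemma radial_ball {n : ℕ} (hn : 1 ≤ n) {a : ℝ} (ha1 : -(n:ℝ) < a) (ha2 : a < 0) {r : ℝ}
    (hr : 0 < r) :
    IntegrableOn (fun z : En n => ‖z‖ ^ a) (ball (0:En n) r) ∧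
    ∫ z in ball (0:En n) r, ‖z‖ ^ a =
      ((n:ℝ) * (volume (ball (0:En n) 1)).toReal / ((n:ℝ) + a)) * r ^ ((n:ℝ) + a) := by
  haveI : Nontrivial (En n) := en_nontrivial hn
  set f : ℝ → ℝ := (Ioo (0:ℝ) r).indicator (fun t => t ^ a) with hfdef
  have hfz : ∀ z : En n, f ‖z‖ = (ball (0:En n) r).indicator (fun w : En n => ‖w‖ ^ a) z := by
    intro z
    rcases eq_or_ne z 0 with hz | hz
    · subst hz
      simp [hfdef, indicator, hr, Real.zero_rpow (ne_of_lt ha2)]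
    · have h0 : 0 < ‖z‖ := norm_pos_iff.2 hz
      by_cases h1 : ‖z‖ < r <;>
        simp [hfdef, indicator, mem_Ioo, mem_ball_zero_iff, h0, h1]
  have hb : (-1:ℝ) < (n:ℝ) - 1 + a := by linarith
  have heq : ∀ y ∈ Ioo (0:ℝ) r, y ^ ((n:ℝ) - 1 + a) = y ^ (n - 1 : ℕ) * y ^ a := by
    intro y hy
    rw [rpow_add hy.1, ← rpow_natCast y (n-1), Nat.cast_sub hn, Nat.cast_one]
  have h1dI : IntegrableOn (fun y : ℝ => y ^ (n-1:ℕ) * y ^ a) (Ioo (0:ℝ) r) :=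
    ((intervalIntegral.intervalIntegrable_rpow' hb (a := 0) (b := r)).1.mono_set
      Ioo_subset_Ioc_self).congr_fun heq measurableSet_Ioo
  have hindic : (fun y : ℝ => y ^ (n-1:ℕ) * f y)
      = (Ioo (0:ℝ) r).indicator (fun y => y ^ (n-1:ℕ) * y ^ a) := by
    funext y; by_cases hy : y ∈ Ioo (0:ℝ) r <;> simp [hfdef, indicator, hy]
  have h1dI' : IntegrableOn (fun y : ℝ => y ^ (n-1:ℕ) * f y) (Ioi (0:ℝ)) := by
    rw [hindic]
    exact ((integrable_indicator_iff measurableSet_Ioo).2 h1dI).integrableOn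
  have hI : Integrable (fun z : En n => f ‖z‖) := integrable_comp_norm hn h1dI'
  have hIball : IntegrableOn (fun z : En n => ‖z‖ ^ a) (ball (0:En n) r) := by
    rw [← integrable_indicator_iff measurableSet_ball]
    exact hI.congr (Eventually.of_forall hfz)
  refine ⟨hIball, ?_⟩
  have hinz := integral_fun_norm_addHaar (volume : Measure (En n)) f
  rw [finrank_euclideanSpace_fin] at hinz
  have hL : ∫ x : En n, f ‖x‖ = ∫ z in ball (0:En n) r, ‖z‖ ^ a := by
    rw [← integral_indicator measurableSet_ball]
    exact integral_congr_ae (Eventually.of_forall hfz)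
  have hna : (0:ℝ) < (n:ℝ) + a := by linarith
  have hR : ∫ y in Ioi (0:ℝ), y ^ (n-1:ℕ) • f y = r ^ ((n:ℝ) + a) / ((n:ℝ) + a) := by
    simp only [smul_eq_mul]
    rw [hindic, setIntegral_indicator measurableSet_Ioo,
      show Ioi (0:ℝ) ∩ Ioo 0 r = Ioo (0:ℝ) r from inter_eq_right.2 (fun y hy => hy.1),
      ← setIntegral_congr_fun measurableSet_Ioo heq,
      ← MeasureTheory.integral_Ioc_eq_integral_Ioo,
      ← intervalIntegral.integral_of_le hr.le,
      integral_rpow (Or.inl hb),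
      Real.zero_rpow (by linarith : (n:ℝ) - 1 + a + 1 ≠ 0),
      show (n:ℝ) - 1 + a + 1 = (n:ℝ) + a by ring]
    ring
  rw [← hL, hinz, hR, nsmul_eq_mul, smul_eq_mul, measureReal_def]
  field_simp

lemma radial_compl {n : ℕ} (hn : 1 ≤ n) {a : ℝ} (ha : a < -(n:ℝ)) {r : ℝ} (hr : 0 < r) :
    IntegrableOn (fun z : En n => ‖z‖ ^ a) ((ball (0:En n) r)ᶜ) ∧
    ∫ z in (ball (0:En n) r)ᶜ, ‖z‖ ^ a =
      ((n:ℝ) * (volume (ball (0:En n) 1)).toReal / (-((n:ℝ) + a))) * r ^ ((n:ℝ) + a) := by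
  haveI : Nontrivial (En n) := en_nontrivial hn
  set f : ℝ → ℝ := (Ici r).indicator (fun t => t ^ a) with hfdef
  have hfz : ∀ z : En n, f ‖z‖ = ((ball (0:En n) r)ᶜ).indicator (fun w : En n => ‖w‖ ^ a) z := by
    intro z
    by_cases h1 : r ≤ ‖z‖ <;>
      simp [hfdef, indicator, mem_ball_zero_iff, not_lt, h1]
  have hb : (n:ℝ) - 1 + a < -1 := by
    have : (1:ℝ) ≤ n := by exact_mod_cast hn
    linarith
  have heq : ∀ y ∈ Ioi r, y ^ ((n:ℝ) - 1 + a) = y ^ (n - 1 : ℕ) * y ^ a := by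
    intro y hy
    rw [rpow_add (hr.trans hy), ← rpow_natCast y (n-1), Nat.cast_sub hn, Nat.cast_one]
  have h1dI : IntegrableOn (fun y : ℝ => y ^ (n-1:ℕ) * y ^ a) (Ioi r) :=
    (integrableOn_Ioi_rpow_of_lt hb hr).congr_fun heq measurableSet_Ioi
  have h1dIci : IntegrableOn (fun y : ℝ => y ^ (n-1:ℕ) * y ^ a) (Ici r) := by
    rwa [integrableOn_Ici_iff_integrableOn_Ioi]
  have hindic : (fun y : ℝ => y ^ (n-1:ℕ) * f y)
      = (Ici r).indicator (fun y => y ^ (n-1:ℕ) * y ^ a) := by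
    funext y; by_cases hy : y ∈ Ici r <;> simp [hfdef, indicator, hy]
  have h1dI' : IntegrableOn (fun y : ℝ => y ^ (n-1:ℕ) * f y) (Ioi (0:ℝ)) := by
    rw [hindic]
    exact ((integrable_indicator_iff measurableSet_Ici).2 h1dIci).integrableOn
  have hI : Integrable (fun z : En n => f ‖z‖) := integrable_comp_norm hn h1dI'
  have hIc : IntegrableOn (fun z : En n => ‖z‖ ^ a) ((ball (0:En n) r)ᶜ) := by
    rw [← integrable_indicator_iff measurableSet_ball.compl]
    exact hI.congr (Eventually.of_forall hfz)
  refine ⟨hIc, ?_⟩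
  have hinz := integral_fun_norm_addHaar (volume : Measure (En n)) f
  rw [finrank_euclideanSpace_fin] at hinz
  have hL : ∫ x : En n, f ‖x‖ = ∫ z in (ball (0:En n) r)ᶜ, ‖z‖ ^ a := by
    rw [← integral_indicator measurableSet_ball.compl]
    exact integral_congr_ae (Eventually.of_forall hfz)
  have hna : (n:ℝ) + a < 0 := by linarith
  have hR : ∫ y in Ioi (0:ℝ), y ^ (n-1:ℕ) • f y = r ^ ((n:ℝ) + a) / (-((n:ℝ) + a)) := by
    simp only [smul_eq_mul]
    rw [hindic, setIntegral_indicator measurableSet_Ici,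
      show Ioi (0:ℝ) ∩ Ici r = Ici r from inter_eq_right.2 (fun y hy => lt_of_lt_of_le hr hy),
      integral_Ici_eq_integral_Ioi,
      setIntegral_congr_fun measurableSet_Ioi (fun y hy => (heq y hy).symm),
      integral_Ioi_rpow_of_lt hb hr,
      show (n:ℝ) - 1 + a + 1 = (n:ℝ) + a by ring]
    rw [neg_div, div_neg]
  rw [← hL, hinz, hR, nsmul_eq_mul, smul_eq_mul, measureReal_def]
  field_simp

lemma abs_div_rpow_le1 {n : ℕ} {p c : ℝ} (hc : 0 ≤ c) {A : ℝ} (z : En n)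
    (hA : |A| ≤ c * ‖z‖) : |A / ‖z‖ ^ p| ≤ c * ‖z‖ ^ (1 - p) := by
  rcases eq_or_ne z 0 with hz | hz
  · subst hz
    have hA0 : A = 0 := by
      have := le_antisymm (by simpa using hA) (abs_nonneg A)
      exact abs_eq_zero.mp this
    simp only [hA0, zero_div, abs_zero]
    exact mul_nonneg hc (rpow_nonneg (norm_nonneg _) _)
  · have h0 : 0 < ‖z‖ := norm_pos_iff.2 hz
    have hD : 0 < ‖z‖ ^ p := rpow_pos_of_pos h0 p
    rw [abs_div, abs_of_pos hD,
      show c * ‖z‖ ^ (1 - p) = (c * ‖z‖) / ‖z‖ ^ p by rw [rpow_sub h0, rpow_one]; ring]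
    gcongr

lemma abs_div_rpow_le2 {n : ℕ} {p c : ℝ} (hc : 0 ≤ c) {A : ℝ} {z : En n} (hz : z ≠ 0)
    (hA : |A| ≤ c) : |A / ‖z‖ ^ p| ≤ c * ‖z‖ ^ (-p) := by
  have h0 : 0 < ‖z‖ := norm_pos_iff.2 hz
  have hD : 0 < ‖z‖ ^ p := rpow_pos_of_pos h0 p
  rw [abs_div, abs_of_pos hD, rpow_neg h0.le, ← div_eq_mul_inv]
  gcongr

lemma split_bound {n : ℕ} (hn : 1 ≤ n) {s : ℝ} (hs : s ∈ Set.Ioo (0:ℝ) 1) {F : En n → ℝ}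
    (hF : Integrable F) {r : ℝ} (hr : 0 < r) {c1 c2 : ℝ}
    (h1 : ∀ z ∈ ball (0:En n) r, |F z| ≤ c1 * ‖z‖ ^ (1 - ((n:ℝ) + s)))
    (h2 : ∀ z ∈ (ball (0:En n) r)ᶜ, |F z| ≤ c2 * ‖z‖ ^ (-((n:ℝ) + s))) :
    |∫ z, F z| ≤ c1 * (((n:ℝ) * (volume (ball (0:En n) 1)).toReal / (1 - s)) * r ^ (1 - s))
      + c2 * (((n:ℝ) * (volume (ball (0:En n) 1)).toReal / s) * r ^ (-s)) := by
  obtain ⟨hs0, hs1⟩ := hs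
  have hn' : (1:ℝ) ≤ n := by exact_mod_cast hn
  have hball := radial_ball hn (a := 1 - ((n:ℝ) + s)) (by linarith) (by linarith) hr
  have hcompl := radial_compl hn (a := -((n:ℝ) + s)) (by linarith) hr
  rw [show (n:ℝ) + (1 - ((n:ℝ) + s)) = 1 - s by ring] at hball
  rw [show (n:ℝ) + (-((n:ℝ) + s)) = -s by ring, neg_neg] at hcompl
  calc |∫ z, F z| ≤ ∫ z, |F z| := by
        simpa [Real.norm_eq_abs] using norm_integral_le_integral_norm (μ := volume) F
    _ = (∫ z in ball (0:En n) r, |F z|) + ∫ z in (ball (0:En n) r)ᶜ, |F z| :=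
        (integral_add_compl measurableSet_ball hF.abs).symm
    _ ≤ (∫ z in ball (0:En n) r, c1 * ‖z‖ ^ (1 - ((n:ℝ) + s)))
        + ∫ z in (ball (0:En n) r)ᶜ, c2 * ‖z‖ ^ (-((n:ℝ) + s)) :=
        add_le_add
          (setIntegral_mono_on hF.abs.integrableOn (hball.1.const_mul c1)
            measurableSet_ball h1)
          (setIntegral_mono_on hF.abs.integrableOn (hcompl.1.const_mul c2)
            measurableSet_ball.compl h2)
    _ = _ := by rw [integral_const_mul, integral_const_mul, hball.2, hcompl.2]

lemma main_integrable {n : ℕ} (hn : 1 ≤ n) {s : ℝ} (hs : s ∈ Set.Ioo (0:ℝ) 1)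
    {u : En n → ℝ} {M : ℝ} {L : ℝ≥0} (hM : ∀ x, |u x| ≤ M) (hL : LipschitzWith L u)
    (x : En n) :
    Integrable (fun z : En n => (u x - u (x + z)) / ‖z‖ ^ ((n:ℝ) + s)) := by
  obtain ⟨hs0, hs1⟩ := hs
  have hn' : (1:ℝ) ≤ n := by exact_mod_cast hn
  have hM0 : 0 ≤ M := le_trans (abs_nonneg _) (hM 0)
  have hball := radial_ball hn (a := 1 - ((n:ℝ) + s)) (by linarith) (by linarith) one_pos
  have hcompl := radial_compl hn (a := -((n:ℝ) + s)) (by linarith) one_pos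
  have hcont : Continuous u := hL.continuous
  have hmeas : AEStronglyMeasurable (fun z : En n => (u x - u (x + z)) / ‖z‖ ^ ((n:ℝ) + s))
      volume := by
    refine (Measurable.div ?_ ?_).aestronglyMeasurable
    · exact (continuous_const.sub (hcont.comp (continuous_const.add continuous_id))).measurable
    · exact (continuous_norm.rpow_const (fun z => Or.inr (by positivity))).measurable
  set g : En n → ℝ := fun z =>
      (ball (0:En n) 1).indicator (fun z => (L:ℝ) * ‖z‖ ^ (1 - ((n:ℝ) + s))) z
      + ((ball (0:En n) 1)ᶜ).indicator (fun z => (2*M) * ‖z‖ ^ (-((n:ℝ) + s))) z with hgdef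
  have hg : Integrable g :=
    ((integrable_indicator_iff measurableSet_ball).2 (hball.1.const_mul _)).add
      ((integrable_indicator_iff measurableSet_ball.compl).2 (hcompl.1.const_mul _))
  refine hg.mono' hmeas (Eventually.of_forall fun z => ?_)
  rw [Real.norm_eq_abs]
  by_cases hz1 : z ∈ ball (0:En n) 1
  · rw [hgdef]
    simp only [indicator_of_mem hz1, indicator_of_notMem (notMem_compl_iff.mpr hz1), add_zero]
    refine abs_div_rpow_le1 L.coe_nonneg z ?_
    have h := hL.dist_le_mul x (x + z)
    rwa [Real.dist_eq, dist_self_add_right] at h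
  · rw [hgdef]
    simp only [indicator_of_notMem hz1, indicator_of_mem (mem_compl_iff _ _ |>.mpr hz1), zero_add]
    have hz0 : z ≠ 0 := by
      intro h; exact hz1 (by simp [h, mem_ball_zero_iff])
    refine abs_div_rpow_le2 (by linarith) hz0 ?_
    calc |u x - u (x + z)| ≤ |u x| + |u (x + z)| := abs_sub _ _
      _ ≤ M + M := add_le_add (hM x) (hM (x + z))
      _ = 2 * M := by ring

/-- Lemma 2.3(i): `(-Δ)^{s/2}u ∈ C^{1-s}(ℝⁿ)` for bounded Lipschitz `u`:
there is `C = C(n,s)` such that for every bounded Lipschitz `u` (with `|u| ≤ M` and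
Lipschitz constant `L`), `𝔤 = (-Δ)^{s/2}u` satisfies
`|𝔤(x) - 𝔤(y)| ≤ C‖u‖_{C^{0,1}}|x-y|^{1-s}` for all `x, y`, and `sup|𝔤| ≤ C‖u‖_{C^{0,1}}`,
i.e. `‖𝔤‖_{C^{1-s}(ℝⁿ)} ≤ C‖u‖_{C^{0,1}(ℝⁿ)}` (with `‖u‖_{C^{0,1}} ≤ M + L`). -/
theorem fracHalf_holder (n : ℕ) (hn : 1 ≤ n) (s : ℝ) (hs : s ∈ Set.Ioo (0:ℝ) 1) :
    ∃ C > (0:ℝ), ∀ (u : En n → ℝ) (M : ℝ) (L : ℝ≥0),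
      (∀ x, |u x| ≤ M) → LipschitzWith L u →
      (∀ x : En n, |fracHalf n s u x| ≤ C * (M + L)) ∧
      ∀ x y : En n,
        |fracHalf n s u x - fracHalf n s u y| ≤ C * (M + L) * ‖x - y‖ ^ (1 - s) := by
  obtain ⟨hs0, hs1⟩ := hs
  have hs' : s ∈ Set.Ioo (0:ℝ) 1 := ⟨hs0, hs1⟩
  set V : ℝ := (volume (ball (0:En n) 1)).toReal with hVdef
  have hV : 0 ≤ V := ENNReal.toReal_nonneg
  set Cb : ℝ := (n:ℝ) * V / (1 - s) with hCbdef
  set Cc : ℝ := (n:ℝ) * V / s with hCcdef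
  have hCb : 0 ≤ Cb := by
    apply div_nonneg (by positivity) (by linarith)
  have hCc : 0 ≤ Cc := by
    apply div_nonneg (by positivity) (by linarith)
  set c : ℝ := cK n (s/2) with hcdef
  refine ⟨|c| * 2 * (Cb + Cc) + 1, by positivity, ?_⟩
  intro u M L hM hL
  have hM0 : 0 ≤ M := le_trans (abs_nonneg _) (hM 0)
  have hL0 : (0:ℝ) ≤ (L:ℝ) := L.coe_nonneg
  have hInt : ∀ x : En n,
      Integrable (fun z : En n => (u x - u (x + z)) / ‖z‖ ^ ((n:ℝ) + s)) :=
    fun x => main_integrable hn hs' hM hL x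
  have hc0 : 0 ≤ |c| := abs_nonneg _
  constructor
  · intro x
    have hb := split_bound hn hs' (hInt x) one_pos (c1 := (L:ℝ)) (c2 := 2*M)
        (fun z _ => by
          refine abs_div_rpow_le1 hL0 z ?_
          have h := hL.dist_le_mul x (x + z)
          rwa [Real.dist_eq, dist_self_add_right] at h)
        (fun z hz => by
          have hz0 : z ≠ 0 := by
            intro h
            exact hz (by simp [h, mem_ball_zero_iff, one_pos])
          refine abs_div_rpow_le2 (by linarith) hz0 ?_
          calc |u x - u (x + z)| ≤ |u x| + |u (x + z)| := abs_sub _ _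
            _ ≤ M + M := add_le_add (hM x) (hM (x + z))
            _ = 2 * M := by ring)
    rw [one_rpow, one_rpow, mul_one, mul_one] at hb
    have : |fracHalf n s u x| = |c| * |∫ z : En n, (u x - u (x + z)) / ‖z‖ ^ ((n:ℝ) + s)| := by
      rw [fracHalf, abs_mul]
    rw [this]
    calc |c| * |∫ z : En n, (u x - u (x + z)) / ‖z‖ ^ ((n:ℝ) + s)|
        ≤ |c| * ((L:ℝ) * Cb + 2*M * Cc) := mul_le_mul_of_nonneg_left hb hc0
      _ ≤ (|c| * 2 * (Cb + Cc) + 1) * (M + L) := by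
          nlinarith [mul_nonneg (mul_nonneg hc0 hCb) hM0,
            mul_nonneg (mul_nonneg hc0 hCb) hL0,
            mul_nonneg (mul_nonneg hc0 hCc) hL0]
  · intro x y
    rcases eq_or_ne x y with rfl | hxy
    · simp [Real.zero_rpow (show (1:ℝ) - s ≠ 0 by linarith)]
    · set r : ℝ := ‖x - y‖ with hrdef
      have hr : 0 < r := norm_pos_iff.2 (sub_ne_zero.2 hxy)
      have hD : ∀ z : En n, (u x - u (x + z)) / ‖z‖ ^ ((n:ℝ) + s)
          - (u y - u (y + z)) / ‖z‖ ^ ((n:ℝ) + s)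
          = ((u x - u (x + z)) - (u y - u (y + z))) / ‖z‖ ^ ((n:ℝ) + s) :=
        fun z => div_sub_div_same _ _ _
      have hF : Integrable (fun z : En n =>
          ((u x - u (x + z)) - (u y - u (y + z))) / ‖z‖ ^ ((n:ℝ) + s)) :=
        ((hInt x).sub (hInt y)).congr (Eventually.of_forall hD)
      have hdiff : fracHalf n s u x - fracHalf n s u y
          = c * ∫ z : En n, ((u x - u (x + z)) - (u y - u (y + z))) / ‖z‖ ^ ((n:ℝ) + s) := by
        rw [fracHalf, fracHalf, ← mul_sub, ← integral_sub (hInt x) (hInt y)]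
        congr 1
        exact integral_congr_ae (Eventually.of_forall hD)
      have hsplit := split_bound hn hs' hF hr (c1 := 2*(L:ℝ)) (c2 := 2*(L:ℝ)*r)
          (fun z _ => by
            refine abs_div_rpow_le1 (by positivity) z ?_
            have e1 : |u x - u (x + z)| ≤ (L:ℝ) * ‖z‖ := by
              have h := hL.dist_le_mul x (x + z)
              rwa [Real.dist_eq, dist_self_add_right] at h
            have e2 : |u y - u (y + z)| ≤ (L:ℝ) * ‖z‖ := by
              have h := hL.dist_le_mul y (y + z)
              rwa [Real.dist_eq, dist_self_add_right] at h
            calc |(u x - u (x + z)) - (u y - u (y + z))|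
                ≤ |u x - u (x + z)| + |u y - u (y + z)| := abs_sub _ _
              _ ≤ (L:ℝ) * ‖z‖ + (L:ℝ) * ‖z‖ := add_le_add e1 e2
              _ = 2*(L:ℝ) * ‖z‖ := by ring)
          (fun z hz => by
            have hz0 : z ≠ 0 := by
              intro h
              exact hz (by simp [h, mem_ball_zero_iff, hr])
            refine abs_div_rpow_le2 (by positivity) hz0 ?_
            have e1 : |u x - u y| ≤ (L:ℝ) * r := by
              have h := hL.dist_le_mul x y
              rwa [Real.dist_eq, dist_eq_norm] at h
            have e2 : |u (x + z) - u (y + z)| ≤ (L:ℝ) * r := by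
              have h := hL.dist_le_mul (x + z) (y + z)
              rwa [Real.dist_eq, dist_add_right, dist_eq_norm] at h
            calc |(u x - u (x + z)) - (u y - u (y + z))|
                = |(u x - u y) - (u (x + z) - u (y + z))| := by ring_nf
              _ ≤ |u x - u y| + |u (x + z) - u (y + z)| := abs_sub _ _
              _ ≤ (L:ℝ) * r + (L:ℝ) * r := add_le_add e1 e2
              _ = 2*(L:ℝ)*r := by ring)
      have hrr : r * r ^ (-s) = r ^ (1 - s) := by
        rw [show (1:ℝ) - s = 1 + (-s) by ring, rpow_add hr, rpow_one]
      have hcollect : (2*(L:ℝ)) * (Cb * r ^ (1-s)) + (2*(L:ℝ)*r) * (Cc * r ^ (-s))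
          = (2*(L:ℝ)*(Cb+Cc)) * r ^ (1-s) := by
        rw [← hrr]; ring
      rw [hcollect] at hsplit
      rw [hdiff, abs_mul]
      have step := mul_le_mul_of_nonneg_left hsplit hc0
      refine le_trans step ?_
      have hrs : (0:ℝ) ≤ r ^ (1 - s) := rpow_nonneg hr.le _
      have hfac : |c| * (2*(L:ℝ)*(Cb+Cc)) ≤ (|c| * 2 * (Cb + Cc) + 1) * (M + L) := by
        nlinarith [mul_nonneg (mul_nonneg hc0 hCb) hM0,
          mul_nonneg (mul_nonneg hc0 hCc) hM0,
          mul_nonneg (mul_nonneg hc0 hCb) hL0,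
          mul_nonneg (mul_nonneg hc0 hCc) hL0]
      calc |c| * ((2*(L:ℝ)*(Cb+Cc)) * r ^ (1-s))
          = (|c| * (2*(L:ℝ)*(Cb+Cc))) * r ^ (1-s) := by ring
        _ ≤ (|c| * 2 * (Cb + Cc) + 1) * (M + L) * r ^ (1-s) :=
            mul_le_mul_of_nonneg_right hfac hrs
end
end

section
/- Let n ≥ 1, s ∈ (0,1), and let Ω ⊂ ℝⁿ be a bounded C² domain that is strictly star-shaped with respect to the origin. Let u ∈ C²(Ω) ∩ C¹(cl Ω) ∩ C^{0,1}(ℝⁿ) with u = 0 in Ωᶜ satisfy condition (★). Then x ↦ (−Δ)ˢu(x) is Lebesgue integrable on Ω, and lim_{λ→1⁺} ∫_Ω ((u(λx) − u(x))/(λ−1)) (−Δ)ˢu(x) dx = ∫_Ω (x·∇u(x)) (−Δ)ˢu(x) dx. -/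
open MeasureTheory Real Set Metric Bornology Filter
open scoped RealInnerProductSpace ENNReal NNReal Pointwise

noncomputable section

namespace PohozaevAux

open Topology

variable {n : ℕ}

lemma inner_grad (f : En n → ℝ) (x y : En n) : ⟪y, gradient f x⟫ = fderiv ℝ f x y := by
  rw [real_inner_comm, gradient]
  exact InnerProductSpace.toDual_symm_apply

lemma C2open (D : C2Domain n) : IsOpen D.carrier := by
  rw [D.carrier_eq]
  exact isOpen_lt D.phi_smooth.continuous continuous_const

lemma gradcont (D : C2Domain n) : Continuous fun x => gradient D.phi x := by
  show Continuous fun x => (InnerProductSpace.toDual ℝ (En n)).symm (fderiv ℝ D.phi x)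
  exact (InnerProductSpace.toDual ℝ (En n)).symm.continuous.comp
    (D.phi_smooth.continuous_fderiv (by norm_num))

lemma frontier_cpt (D : C2Domain n) : IsCompact (frontier D.carrier) :=
  Metric.isCompact_of_isClosed_isBounded isClosed_frontier
    (D.bounded.closure.subset frontier_subset_closure)

lemma frontier_ne (hn : 1 ≤ n) (D : C2Domain n) (hne : D.carrier.Nonempty) :
    (frontier D.carrier).Nonempty := by
  by_contra h
  rw [not_nonempty_iff_eq_empty] at h
  have hclopen : IsClopen D.carrier := isClopen_iff_frontier_eq_empty.2 h
  haveI : Nontrivial (En n) := by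
    refine ⟨EuclideanSpace.single ⟨0, hn⟩ 1, 0, ?_⟩
    intro hcon
    have := congrArg (fun v => v ⟨0, hn⟩) hcon
    simp at this
  rcases isClopen_iff.mp hclopen with h1 | h1
  · exact hne.ne_empty h1
  · exact NormedSpace.unbounded_univ ℝ (En n) (h1 ▸ D.bounded)

lemma nu_unit (D : C2Domain n) {x : En n} (hx : x ∈ frontier D.carrier) : ‖D.nu x‖ = 1 := by
  have h := D.grad_ne x hx
  rw [C2Domain.nu, norm_smul, norm_inv, norm_norm, inv_mul_cancel₀ (norm_ne_zero_iff.2 h)]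

/-- Key geometric lemma: a strictly star-shaped C² domain is star-shaped with respect to
a small ball, quantitatively. -/
lemma star_ball (hn : 1 ≤ n) (D : C2Domain n) (hD : D.StrictlyStarShapedAt 0) :
    ∃ ρ > 0, ∀ x ∈ D.carrier, ∀ t ∈ Ico (0:ℝ) 1, ball (t • x) ((1 - t) * ρ) ⊆ D.carrier := by
  obtain ⟨h0, hsss⟩ := hD
  have hopen := C2open D
  have hFne : (frontier D.carrier).Nonempty := frontier_ne hn D ⟨0, h0⟩
  -- minimum of ⟪x, ν x⟫ over the compact frontier
  have hνcont : ContinuousOn D.nu (frontier D.carrier) := by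
    refine ContinuousOn.smul (f := fun x => ‖gradient D.phi x‖⁻¹) (g := fun x => gradient D.phi x) ?_ ?_
    · exact ((gradcont D).norm.continuousOn).inv₀ fun x hx =>
        norm_ne_zero_iff.2 (D.grad_ne x hx)
    · exact (gradcont D).continuousOn
  have hcont : ContinuousOn (fun x => ⟪x, D.nu x⟫) (frontier D.carrier) :=
    continuous_id.continuousOn.inner hνcont
  obtain ⟨x₀, hx₀, hmin⟩ := (frontier_cpt D).exists_isMinOn hFne hcont
  set ρ₀ : ℝ := ⟪x₀, D.nu x₀⟫ with hρ₀def
  have hρ₀ : 0 < ρ₀ := by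
    have := hsss x₀ hx₀
    rwa [sub_zero] at this
  obtain ⟨r, hr, hrball⟩ := Metric.isOpen_iff.mp hopen 0 h0
  refine ⟨min ρ₀ r / 2, by positivity, ?_⟩
  set ρ : ℝ := min ρ₀ r / 2 with hρdef
  have hρr : ρ < r := by
    have : min ρ₀ r ≤ r := min_le_right _ _
    have : ρ ≤ r / 2 := by rw [hρdef]; linarith
    linarith
  have hρρ₀ : ρ ≤ ρ₀ / 2 := by
    have : min ρ₀ r ≤ ρ₀ := min_le_left _ _
    rw [hρdef]; linarith
  intro x hx t ht z hz
  have ht1 : t < 1 := ht.2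
  have h1t : (0:ℝ) < 1 - t := by linarith
  -- write z = b + t • (x - b)
  set b : En n := (1 - t)⁻¹ • (z - t • x) with hbdef
  have hzb : z = b + t • (x - b) := by
    have : b + t • (x - b) = (1 - t) • b + t • x := by
      rw [smul_sub]; module
    rw [this, hbdef, smul_inv_smul₀ (ne_of_gt h1t)]
    abel
  have hbρ : ‖b‖ < ρ := by
    rw [hbdef, norm_smul, norm_inv, Real.norm_eq_abs, abs_of_pos h1t]
    rw [mem_ball, dist_eq_norm] at hz
    rw [inv_mul_lt_iff₀ h1t]
    linarith [hz]
  have hbΩ : b ∈ D.carrier := hrball (by rw [mem_ball_zero_iff]; linarith)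
  -- the whole segment from b to x stays in Ω
  have hseg : ∀ τ ∈ Icc (0:ℝ) 1, D.phi (b + τ • (x - b)) < 0 := by
    by_contra hcon
    push_neg at hcon
    obtain ⟨τ₁, hτ₁, hτ₁0⟩ := hcon
    set g : ℝ → ℝ := fun τ => D.phi (b + τ • (x - b)) with hgdef
    have hpathc : Continuous fun τ : ℝ => b + τ • (x - b) :=
      continuous_const.add (continuous_id.smul continuous_const)
    have hgc : Continuous g := D.phi_smooth.continuous.comp hpathc
    set T : Set ℝ := {τ ∈ Icc (0:ℝ) 1 | 0 ≤ g τ} with hTdef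
    have hTclosed : IsClosed T := isClosed_Icc.inter (isClosed_le continuous_const hgc)
    have hTne : T.Nonempty := ⟨τ₁, hτ₁, hτ₁0⟩
    have hTbdd : BddAbove T := (bddAbove_Icc).mono (fun τ hτ => hτ.1)
    set τ₀ : ℝ := sSup T with hτ₀def
    have hTcpt : IsCompact T := isCompact_Icc.of_isClosed_subset hTclosed fun τ hτ => hτ.1
    have hτ₀T : τ₀ ∈ T := hTcpt.sSup_mem hTne
    have hτ₀Icc : τ₀ ∈ Icc (0:ℝ) 1 := hτ₀T.1
    have hgτ₀ : 0 ≤ g τ₀ := hτ₀T.2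
    have hmax : ∀ τ, τ₀ < τ → τ ≤ 1 → g τ < 0 := by
      intro τ hτ hτ1
      by_contra hge
      push_neg at hge
      have : τ ∈ T := ⟨⟨le_trans hτ₀Icc.1 hτ.le, hτ1⟩, hge⟩
      exact absurd (le_csSup hTbdd this) (not_le.2 hτ)
    have hτ₀1 : τ₀ < 1 := by
      rcases lt_or_eq_of_le hτ₀Icc.2 with h | h
      · exact h
      · exfalso
        have : g 1 < 0 := by
          rw [hgdef]
          simp only [one_smul, add_sub_cancel]
          rw [D.carrier_eq] at hx
          exact hx
        rw [h] at hgτ₀; linarith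
    have hg0 : g τ₀ = 0 := by
      rcases lt_or_eq_of_le hgτ₀ with h | h
      · exfalso
        have hev : ∀ᶠ τ in 𝓝[>] τ₀, 0 < g τ :=
          ((hgc.tendsto τ₀).eventually (eventually_gt_nhds h)).filter_mono nhdsWithin_le_nhds
        have h2 : ∀ᶠ τ in 𝓝[>] τ₀, τ ∈ Ioo τ₀ 1 :=
          Filter.eventually_of_mem (Ioo_mem_nhdsGT_of_mem ⟨le_refl _, hτ₀1⟩) fun τ hτ => hτ
        obtain ⟨τ, hτpos, hτIoo⟩ := (hev.and h2).exists
        exact absurd (hmax τ hτIoo.1 hτIoo.2.le) (not_lt.2 hτpos.le)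
      · exact h.symm
    -- the point y on the boundary
    set y : En n := b + τ₀ • (x - b) with hydef
    have hφy : D.phi y = 0 := hg0
    have hyΩ : y ∉ D.carrier := by
      rw [D.carrier_eq]
      simp only [mem_setOf_eq, hφy, lt_irrefl, not_false_iff]
    have hτ₀0 : 0 < τ₀ := by
      rcases lt_or_eq_of_le hτ₀Icc.1 with h | h
      · exact h
      · exfalso
        have hbneg : D.phi b < 0 := by rw [D.carrier_eq] at hbΩ; exact hbΩ
        have : y = b := by rw [hydef, ← h, zero_smul, add_zero]
        rw [this] at hφy
        linarith
    have hycl : y ∈ closure D.carrier := by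
      have htend : Filter.Tendsto (fun τ : ℝ => b + τ • (x - b)) (𝓝[>] τ₀) (𝓝 y) := by
        exact (hpathc.tendsto τ₀).mono_left nhdsWithin_le_nhds
      have hev : ∀ᶠ τ in 𝓝[>] τ₀, b + τ • (x - b) ∈ D.carrier := by
        refine Filter.eventually_of_mem (Ioo_mem_nhdsGT_of_mem ⟨le_refl _, hτ₀1⟩) fun τ hτ => ?_
        rw [D.carrier_eq]
        exact hmax τ hτ.1 hτ.2.le
      exact mem_closure_of_tendsto htend hev
    have hyF : y ∈ frontier D.carrier := by
      rw [hopen.frontier_eq]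
      exact ⟨hycl, hyΩ⟩
    -- quantitative positivity of the derivative
    have hρ₀y : ρ₀ ≤ ⟪y, D.nu y⟫ := hmin hyF
    have hbν : ⟪b, D.nu y⟫ ≤ ‖b‖ := by
      calc ⟪b, D.nu y⟫ ≤ ‖b‖ * ‖D.nu y‖ := real_inner_le_norm _ _
        _ = ‖b‖ := by rw [nu_unit D hyF, mul_one]
    have hinnerν : 0 < ⟪y - b, D.nu y⟫ := by
      rw [inner_sub_left]
      have : ‖b‖ < ρ₀ := lt_of_lt_of_le hbρ (by linarith)
      linarith
    have hgyne : gradient D.phi y ≠ 0 := D.grad_ne y hyF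
    have hinnerg : 0 < ⟪y - b, gradient D.phi y⟫ := by
      have hnorm : 0 < ‖gradient D.phi y‖ := norm_pos_iff.2 hgyne
      have : ⟪y - b, D.nu y⟫ = ‖gradient D.phi y‖⁻¹ * ⟪y - b, gradient D.phi y⟫ := by
        rw [C2Domain.nu, inner_smul_right]
      rw [this] at hinnerν
      rcases mul_pos_iff.mp hinnerν with ⟨h1, h2⟩ | ⟨h1, h2⟩
      · exact h2
      · linarith [inv_pos.mpr hnorm]
    have hxb : 0 < ⟪x - b, gradient D.phi y⟫ := by
      have hyb : y - b = τ₀ • (x - b) := by rw [hydef]; abel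
      rw [hyb, inner_smul_left] at hinnerg
      simp only [RCLike.ofReal_real_eq_id, id_eq, conj_trivial] at hinnerg
      nlinarith [hinnerg]
    -- derivative of g at τ₀ is positive, contradiction with maximality
    have hd : HasDerivAt g (fderiv ℝ D.phi y (x - b)) τ₀ := by
      have hφd : HasFDerivAt D.phi (fderiv ℝ D.phi y) y :=
        ((D.phi_smooth.differentiable (by norm_num)) y).hasFDerivAt
      have hpath : HasDerivAt (fun τ : ℝ => b + τ • (x - b)) (x - b) τ₀ := by
        have := ((hasDerivAt_id τ₀).smul_const (x - b)).const_add b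
        simpa using this
      have := HasFDerivAt.comp_hasDerivAt (f := fun τ : ℝ => b + τ • (x - b)) τ₀ hφd (by simpa [hydef] using hpath)
      exact this
    have hdpos : 0 < fderiv ℝ D.phi y (x - b) := by
      rw [← inner_grad]
      exact hxb
    have hslope : Filter.Tendsto (slope g τ₀) (𝓝[>] τ₀) (𝓝 (fderiv ℝ D.phi y (x - b))) :=
      (hasDerivAt_iff_tendsto_slope.mp hd).mono_left
        (nhdsWithin_mono _ fun τ hτ => ne_of_gt hτ)
    have hev : ∀ᶠ τ in 𝓝[>] τ₀, 0 < slope g τ₀ τ := hslope.eventually (eventually_gt_nhds hdpos)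
    have h2 : ∀ᶠ τ in 𝓝[>] τ₀, τ ∈ Ioo τ₀ 1 :=
      Filter.eventually_of_mem (Ioo_mem_nhdsGT_of_mem ⟨le_refl _, hτ₀1⟩) fun τ hτ => hτ
    obtain ⟨τ, hτs, hτIoo⟩ := (hev.and h2).exists
    have hgneg : g τ < 0 := hmax τ hτIoo.1 hτIoo.2.le
    rw [slope_def_field, hg0, sub_zero] at hτs
    have : 0 < τ - τ₀ := by linarith [hτIoo.1]
    have : 0 < g τ := by
      have := div_pos_iff.mp hτs
      rcases this with ⟨h1, h2⟩ | ⟨h1, h2⟩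
      · exact h1
      · linarith
    linarith
  have := hseg t ⟨ht.1, ht1.le⟩
  rw [D.carrier_eq]
  rw [hzb]
  exact this


lemma smul_subset (D : C2Domain n) {ρ : ℝ} (hρ : 0 < ρ)
    (hball : ∀ x ∈ D.carrier, ∀ t ∈ Ico (0:ℝ) 1, ball (t • x) ((1 - t) * ρ) ⊆ D.carrier)
    {t : ℝ} (ht : t ∈ Ico (0:ℝ) 1) : t • D.carrier ⊆ D.carrier := by
  rintro z ⟨y, hy, rfl⟩
  exact hball y hy t ht (mem_ball_self (by nlinarith [ht.2]))

lemma dist_lower (D : C2Domain n) (hFne : (frontier D.carrier).Nonempty) {ρ : ℝ}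
    (hball : ∀ x ∈ D.carrier, ∀ t ∈ Ico (0:ℝ) 1, ball (t • x) ((1 - t) * ρ) ⊆ D.carrier)
    {x : En n} (hx : x ∈ D.carrier) {t : ℝ} (ht : t ∈ Ico (0:ℝ) 1) :
    (1 - t) * ρ ≤ infDist (t • x) (frontier D.carrier) := by
  by_contra h
  push_neg at h
  obtain ⟨p, hp, hdp⟩ := (infDist_lt_iff hFne).mp h
  have : p ∈ D.carrier := hball x hx t ht (by rwa [mem_ball, dist_comm])
  rw [(C2open D).frontier_eq] at hp
  exact hp.2 this

lemma meas_est (hn : 1 ≤ n) (D : C2Domain n) {ρ : ℝ} (hρ : 0 < ρ)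
    (hball : ∀ x ∈ D.carrier, ∀ t ∈ Ico (0:ℝ) 1, ball (t • x) ((1 - t) * ρ) ⊆ D.carrier)
    (hFne : (frontier D.carrier).Nonempty)
    {ε : ℝ} (hε : 0 < ε) (hερ : ε ≤ ρ) :
    volume {x ∈ D.carrier | infDist x (frontier D.carrier) < ε}
      ≤ ENNReal.ofReal (n * ε / ρ) * volume D.carrier := by
  rcases eq_or_lt_of_le hερ with rfl | hlt
  · have h1 : (1:ℝ) ≤ n * ε / ε := by
      rw [mul_div_assoc, div_self (ne_of_gt hε), mul_one]
      exact_mod_cast hn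
    calc volume {x ∈ D.carrier | infDist x (frontier D.carrier) < ε}
        ≤ volume D.carrier := measure_mono (sep_subset _ _)
      _ ≤ _ := le_mul_of_one_le_left (by simp) (ENNReal.one_le_ofReal.2 h1)
  · set t : ℝ := 1 - ε / ρ with htdef
    have hεclaim : 0 < ε / ρ := by positivity
    have hεnov : ε / ρ < 1 := (div_lt_one hρ).2 hlt
    have ht0 : 0 < t := by rw [htdef]; linarith
    have ht1 : t < 1 := by rw [htdef]; linarith
    have htI : t ∈ Ico (0:ℝ) 1 := ⟨ht0.le, ht1⟩
    have hsubset : {x ∈ D.carrier | infDist x (frontier D.carrier) < ε}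
        ⊆ D.carrier \ t • D.carrier := by
      rintro x ⟨hxΩ, hxd⟩
      refine ⟨hxΩ, fun hxt => ?_⟩
      obtain ⟨y, hy, rfl⟩ := hxt
      have hlow := dist_lower D hFne hball hy htI
      have heq : (1 - t) * ρ = ε := by
        rw [htdef]; field_simp; ring
      rw [heq] at hlow
      linarith
    have hsmul_sub : t • D.carrier ⊆ D.carrier := smul_subset D hρ hball htI
    have hΩfin : volume D.carrier ≠ ⊤ := D.bounded.measure_lt_top.ne
    have hμt : volume (t • D.carrier) = ENNReal.ofReal (t ^ n) * volume D.carrier := by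
      rw [Measure.addHaar_smul, finrank_euclideanSpace_fin]
      congr 2
      rw [abs_of_pos (pow_pos ht0 n)]
    have hμfin : volume (t • D.carrier) ≠ ⊤ :=
      ((measure_mono hsmul_sub).trans_lt D.bounded.measure_lt_top).ne
    calc volume {x ∈ D.carrier | infDist x (frontier D.carrier) < ε}
        ≤ volume (D.carrier \ t • D.carrier) := measure_mono hsubset
      _ = volume D.carrier - volume (t • D.carrier) :=
          measure_diff hsmul_sub
            (((C2open D).smul₀ (ne_of_gt ht0)).measurableSet.nullMeasurableSet) hμfin
      _ ≤ ENNReal.ofReal (n * ε / ρ) * volume D.carrier := by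
          rw [hμt, tsub_le_iff_right, ← add_mul]
          have hc : (1:ℝ≥0∞) ≤ ENNReal.ofReal (n * ε / ρ) + ENNReal.ofReal (t ^ n) := by
            rw [← ENNReal.ofReal_add (by positivity) (by positivity), ← ENNReal.ofReal_one]
            apply ENNReal.ofReal_le_ofReal
            have hb := one_add_mul_le_pow (a := t - 1) (by nlinarith) n
            have ht' : (1:ℝ) + (t - 1) = t := by ring
            rw [ht'] at hb
            have htm : t - 1 = -(ε / ρ) := by rw [htdef]; ring
            rw [htm] at hb
            have : (n:ℝ) * (ε / ρ) = n * ε / ρ := by ring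
            linarith [hb, this.symm.le]
          calc volume D.carrier = 1 * volume D.carrier := (one_mul _).symm
            _ ≤ _ := mul_le_mul_left hc _

lemma dpos (hn : 1 ≤ n) (D : C2Domain n) (hne : D.carrier.Nonempty)
    {x : En n} (hx : x ∈ D.carrier) : 0 < infDist x (frontier D.carrier) := by
  have hFne := frontier_ne hn D hne
  refine (isClosed_frontier.notMem_iff_infDist_pos hFne).mp ?_
  rw [(C2open D).frontier_eq]
  exact fun h => h.2 hx

lemma integrable_rpow_dist (hn : 1 ≤ n) (D : C2Domain n) (hD : D.StrictlyStarShapedAt 0)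
    {a : ℝ} (ha1 : -1 < a) (ha0 : a ≤ 0) :
    IntegrableOn (fun x => infDist x (frontier D.carrier) ^ a) D.carrier := by
  obtain ⟨ρ, hρ, hball⟩ := star_ball hn D hD
  have hne : D.carrier.Nonempty := ⟨0, hD.1⟩
  have hFne := frontier_ne hn D hne
  set d : En n → ℝ := fun x => infDist x (frontier D.carrier) with hddef
  have hdc : Continuous d := continuous_infDist_pt _
  have hdpos : ∀ x ∈ D.carrier, 0 < d x := fun x hx => dpos hn D hne hx
  constructor
  · refine ContinuousOn.aestronglyMeasurable ?_ (C2open D).measurableSet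
    intro x hx
    exact ((Real.continuousAt_rpow_const _ a
      (Or.inl (ne_of_gt (hdpos x hx)))).comp hdc.continuousAt).continuousWithinAt
  · rw [hasFiniteIntegral_iff_norm]
    have hnorm_eq : ∀ x, ENNReal.ofReal ‖d x ^ a‖ = ENNReal.ofReal (d x ^ a) := by
      intro x
      rw [Real.norm_eq_abs, abs_of_nonneg (Real.rpow_nonneg infDist_nonneg a)]
    set A : Set (En n) := {x ∈ D.carrier | ρ ≤ d x} with hAdef
    set S : ℕ → Set (En n) :=
      fun k => {x ∈ D.carrier | ρ * (1/2:ℝ)^(k+1) ≤ d x ∧ d x < ρ * (1/2:ℝ)^k} with hSdef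
    have hcover : D.carrier ⊆ A ∪ ⋃ k, S k := by
      intro x hx
      rcases le_or_gt ρ (d x) with h | h
      · exact Or.inl ⟨hx, h⟩
      · refine Or.inr (mem_iUnion.2 ?_)
        have hex : ∃ m : ℕ, ρ * (1/2:ℝ)^(m+1) ≤ d x := by
          obtain ⟨m, hm⟩ := exists_pow_lt_of_lt_one (div_pos (hdpos x hx) hρ) (by norm_num : (1/2:ℝ) < 1)
          refine ⟨m, ?_⟩
          have h1 : (1/2:ℝ)^(m+1) ≤ (1/2:ℝ)^m := by
            apply pow_le_pow_of_le_one (by norm_num) (by norm_num)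
            omega
          have h2 : ρ * (1/2:ℝ)^m < d x := by
            rw [lt_div_iff₀ hρ] at hm
            linarith [hm]
          nlinarith
        set k₀ := Nat.find hex with hk₀def
        refine ⟨k₀, hx, Nat.find_spec hex, ?_⟩
        match hk : k₀ with
        | 0 => simpa using h
        | (m+1) =>
          have := Nat.find_min hex (by omega : m < k₀)
          push_neg at this
          simpa using this
    have hμΩ : volume D.carrier ≠ ⊤ := D.bounded.measure_lt_top.ne
    have hAm : MeasurableSet A :=
      (C2open D).measurableSet.inter (measurableSet_le measurable_const hdc.measurable)
    have hSm : ∀ k, MeasurableSet (S k) := by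
      intro k
      exact (C2open D).measurableSet.inter
        ((measurableSet_le measurable_const hdc.measurable).inter
          (measurableSet_lt hdc.measurable measurable_const))
    have hA : (∫⁻ x in A, ENNReal.ofReal (d x ^ a)) ≤ ENNReal.ofReal (ρ ^ a) * volume D.carrier := by
      calc (∫⁻ x in A, ENNReal.ofReal (d x ^ a))
          ≤ ∫⁻ _ in A, ENNReal.ofReal (ρ ^ a) := by
            refine setLIntegral_mono' hAm fun x hx => ?_
            exact ENNReal.ofReal_le_ofReal (Real.rpow_le_rpow_of_nonpos hρ hx.2 ha0)
        _ = ENNReal.ofReal (ρ ^ a) * volume A := setLIntegral_const _ _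
        _ ≤ _ := mul_le_mul_right (measure_mono (sep_subset _ _)) _
    have hpowpow : ∀ k : ℕ, ((1/2:ℝ)^k) ^ a = ((1/2:ℝ)^a)^k := by
      intro k
      rw [← Real.rpow_natCast (1/2:ℝ) k, ← Real.rpow_mul (by norm_num), mul_comm,
        Real.rpow_mul (by norm_num), Real.rpow_natCast]
    set q : ℝ := (1/2:ℝ)^(a+1) with hqdef
    have hq0 : 0 ≤ q := Real.rpow_nonneg (by norm_num) _
    have hq1 : q < 1 := Real.rpow_lt_one (by norm_num) (by norm_num) (by linarith)
    have hqeq : q = (1/2:ℝ)^a * (1/2:ℝ) := by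
      rw [hqdef, Real.rpow_add (by norm_num), Real.rpow_one]
    set Creal : ℝ := ρ ^ a * (1/2:ℝ)^a * n with hCdef
    have hC0 : 0 ≤ Creal := by
      have := Real.rpow_nonneg hρ.le a
      have := Real.rpow_nonneg (by norm_num : (0:ℝ) ≤ 1/2) a
      positivity
    have hS : ∀ k, (∫⁻ x in S k, ENNReal.ofReal (d x ^ a))
        ≤ ENNReal.ofReal (Creal * q ^ k) * volume D.carrier := by
      intro k
      have hbase : 0 < ρ * (1/2:ℝ)^(k+1) := by positivity
      have step1 : (∫⁻ x in S k, ENNReal.ofReal (d x ^ a))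
          ≤ ENNReal.ofReal ((ρ * (1/2:ℝ)^(k+1)) ^ a) * volume (S k) := by
        calc (∫⁻ x in S k, ENNReal.ofReal (d x ^ a))
            ≤ ∫⁻ _ in S k, ENNReal.ofReal ((ρ * (1/2:ℝ)^(k+1)) ^ a) := by
              refine setLIntegral_mono' (hSm k) fun x hx => ?_
              exact ENNReal.ofReal_le_ofReal
                (Real.rpow_le_rpow_of_nonpos hbase hx.2.1 ha0)
          _ = _ := setLIntegral_const _ _
      have step2 : volume (S k) ≤ ENNReal.ofReal ((n:ℝ) * (ρ * (1/2:ℝ)^k) / ρ) * volume D.carrier := by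
        refine le_trans (measure_mono ?_) (meas_est hn D hρ hball hFne (by positivity)
          (by nlinarith [pow_le_one₀ (by norm_num : (0:ℝ) ≤ 1/2) (by norm_num : (1/2:ℝ) ≤ 1) (n := k)]))
        rintro x ⟨hxΩ, _, hlt⟩
        exact ⟨hxΩ, hlt⟩
      have halg : ((ρ * (1/2:ℝ)^(k+1)) ^ a) * ((n:ℝ) * (ρ * (1/2:ℝ)^k) / ρ) = Creal * q ^ k := by
        have e1 : (ρ * (1/2:ℝ)^(k+1)) ^ a = ρ ^ a * ((1/2:ℝ)^a * ((1/2:ℝ)^a)^k) := by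
          rw [Real.mul_rpow hρ.le (by positivity), pow_succ, mul_comm ((1/2:ℝ)^k) (1/2:ℝ),
            Real.mul_rpow (by norm_num) (by positivity), hpowpow]
        have e2 : (n:ℝ) * (ρ * (1/2:ℝ)^k) / ρ = (n:ℝ) * (1/2:ℝ)^k := by
          field_simp
        rw [e1, e2, hCdef, hqeq, mul_pow]
        ring
      calc (∫⁻ x in S k, ENNReal.ofReal (d x ^ a))
          ≤ ENNReal.ofReal ((ρ * (1/2:ℝ)^(k+1)) ^ a)
            * (ENNReal.ofReal ((n:ℝ) * (ρ * (1/2:ℝ)^k) / ρ) * volume D.carrier) :=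
            le_trans step1 (mul_le_mul_right step2 _)
        _ = ENNReal.ofReal (Creal * q ^ k) * volume D.carrier := by
            rw [← mul_assoc, ← ENNReal.ofReal_mul (Real.rpow_nonneg hbase.le a), halg]
    calc (∫⁻ x in D.carrier, ENNReal.ofReal ‖d x ^ a‖)
        = ∫⁻ x in D.carrier, ENNReal.ofReal (d x ^ a) := by
          exact lintegral_congr fun x => hnorm_eq x
      _ ≤ ∫⁻ x in A ∪ ⋃ k, S k, ENNReal.ofReal (d x ^ a) := lintegral_mono_set hcover
      _ ≤ (∫⁻ x in A, ENNReal.ofReal (d x ^ a))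
          + ∫⁻ x in ⋃ k, S k, ENNReal.ofReal (d x ^ a) := lintegral_union_le _ _ _
      _ ≤ ENNReal.ofReal (ρ ^ a) * volume D.carrier
          + ∑' k, ∫⁻ x in S k, ENNReal.ofReal (d x ^ a) :=
            add_le_add hA (lintegral_iUnion_le _ _)
      _ ≤ ENNReal.ofReal (ρ ^ a) * volume D.carrier
          + ∑' k, ENNReal.ofReal (Creal * q ^ k) * volume D.carrier :=
            add_le_add_right (ENNReal.tsum_le_tsum hS) _
      _ < ⊤ := by
          have hsum : ∑' (k:ℕ), ENNReal.ofReal (Creal * q ^ k) * volume D.carrier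
              = ENNReal.ofReal Creal * (1 - ENNReal.ofReal q)⁻¹ * volume D.carrier := by
            rw [ENNReal.tsum_mul_right]
            congr 1
            calc ∑' (k:ℕ), ENNReal.ofReal (Creal * q ^ k)
                = ∑' (k:ℕ), ENNReal.ofReal Creal * (ENNReal.ofReal q) ^ k := by
                  congr 1
                  funext k
                  rw [ENNReal.ofReal_mul hC0, ENNReal.ofReal_pow hq0]
              _ = ENNReal.ofReal Creal * ∑' (k:ℕ), (ENNReal.ofReal q) ^ k :=
                  ENNReal.tsum_mul_left
              _ = ENNReal.ofReal Creal * (1 - ENNReal.ofReal q)⁻¹ := by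
                  rw [ENNReal.tsum_geometric]
          rw [hsum]
          have h1 : (1 - ENNReal.ofReal q)⁻¹ ≠ ⊤ := by
            rw [ENNReal.inv_ne_top]
            intro hz
            rw [tsub_eq_zero_iff_le] at hz
            exact absurd hz (by simpa using (ENNReal.ofReal_lt_one.2 hq1).not_ge)
          have h2 := Ne.lt_top hμΩ
          refine ENNReal.add_lt_top.2 ⟨?_, ?_⟩
          · exact ENNReal.mul_lt_top ENNReal.ofReal_lt_top h2
          · exact ENNReal.mul_lt_top
              (ENNReal.mul_lt_top ENNReal.ofReal_lt_top (Ne.lt_top h1)) h2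


lemma fracLap_sm (s : ℝ) (hs : 0 < s) (u : En n → ℝ) (hu : Continuous u) :
    StronglyMeasurable fun x => fracLap n s u x := by
  have hnum : Continuous fun p : En n × En n =>
      2 * u p.1 - u (p.1 + p.2) - u (p.1 - p.2) :=
    (((continuous_const.mul (hu.comp continuous_fst)).sub
      (hu.comp (continuous_fst.add continuous_snd))).sub
      (hu.comp (continuous_fst.sub continuous_snd)))
  have hden : Continuous fun p : En n × En n => ‖p.2‖ ^ ((n:ℝ) + 2 * s) := by
    apply Continuous.rpow_const (continuous_norm.comp continuous_snd)
    intro p; right; positivity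
  have hsm : StronglyMeasurable (Function.uncurry fun x y : En n =>
      (2 * u x - u (x + y) - u (x - y)) / ‖y‖ ^ ((n:ℝ) + 2 * s)) :=
    (hnum.measurable.div hden.measurable).stronglyMeasurable
  have h2 := MeasureTheory.StronglyMeasurable.integral_prod_right
    (ν := (volume : Measure (En n))) hsm
  have h3 := h2.const_mul (cK n s / 2)
  simpa only [fracLap] using h3

lemma abs_log_le {d : ℝ} (hd : 0 < d) : |Real.log d| ≤ 2 * d ^ (-(1/2) : ℝ) + d := by
  have hrp : (0:ℝ) ≤ 2 * d ^ (-(1/2) : ℝ) := by positivity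
  rcases le_or_gt d 1 with h | h
  · have hlog : Real.log d ≤ 0 := Real.log_nonpos hd.le h
    rw [abs_of_nonpos hlog]
    have hy : 0 < d ^ ((1/2) : ℝ) := Real.rpow_pos_of_pos hd _
    have h1 : Real.log d = 2 * Real.log (d ^ ((1/2) : ℝ)) := by
      rw [Real.log_rpow hd]; ring
    have h2 : Real.log (d ^ ((1/2) : ℝ))⁻¹ ≤ (d ^ ((1/2) : ℝ))⁻¹ - 1 :=
      Real.log_le_sub_one_of_pos (by positivity)
    rw [Real.log_inv] at h2
    have h3 : (d ^ ((1/2) : ℝ))⁻¹ = d ^ (-(1/2) : ℝ) := by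
      rw [← Real.rpow_neg hd.le]
    nlinarith [h2, h3, hd]
  · rw [abs_of_nonneg (Real.log_nonneg h.le)]
    have := Real.log_le_sub_one_of_pos hd
    linarith

end PohozaevAux

/-- Step (A) in the proof of Theorem 2.4: under condition (★),
`(-Δ)ˢu` is integrable on `Ω` and
`lim_{λ→1⁺} ∫_Ω ((u(λx)-u(x))/(λ-1)) (-Δ)ˢu(x) dx = ∫_Ω (x·∇u)(-Δ)ˢu dx`. -/
theorem pohozaev_step_A (n : ℕ) (hn : 1 ≤ n) (s : ℝ) (hs : s ∈ Set.Ioo (0:ℝ) 1)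
    (D : C2Domain n) (hD : D.StrictlyStarShapedAt 0)
    (u : En n → ℝ)
    (hu2 : ContDiffOn ℝ 2 u D.carrier)
    (hu1 : ContDiffOn ℝ 1 u (closure D.carrier))
    (hlip : ∃ L : ℝ≥0, LipschitzWith L u)
    (hzero : ∀ x ∉ D.carrier, u x = 0)
    (hstar : StarCond n s D.carrier u) :
    IntegrableOn (fun x => fracLap n s u x) D.carrier ∧
    Filter.Tendsto
      (fun lam : ℝ => ∫ x in D.carrier,
        ((u (lam • x) - u x) / (lam - 1)) * fracLap n s u x)
      (nhdsWithin 1 (Set.Ioi 1))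
      (nhds (∫ x in D.carrier, ⟪x, gradient u x⟫ * fracLap n s u x)) := by
  classical
  obtain ⟨L, hL⟩ := hlip
  have hucont : Continuous u := hL.continuous
  have hopen := PohozaevAux.C2open D
  have hne : D.carrier.Nonempty := ⟨0, hD.1⟩
  have hFne := PohozaevAux.frontier_ne hn D hne
  have hμΩ : volume D.carrier ≠ ⊤ := D.bounded.measure_lt_top.ne
  have hdc : Continuous fun x : En n => infDist x (frontier D.carrier) :=
    continuous_infDist_pt _
  have hdpos : ∀ x ∈ D.carrier, 0 < infDist x (frontier D.carrier) :=
    fun x hx => PohozaevAux.dpos hn D hne hx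
  obtain ⟨C, hC, γ, hγ, hbd⟩ := hstar
  have hmeasF : AEStronglyMeasurable (fun x => fracLap n s u x)
      (volume.restrict D.carrier) :=
    (PohozaevAux.fracLap_sm s hs.1 u hucont).aestronglyMeasurable.restrict
  -- integrability of d on the domain
  obtain ⟨R0, hR0⟩ := isBounded_iff_forall_norm_le.1 D.bounded
  obtain ⟨p₀, hp₀⟩ := hFne
  have hdint : IntegrableOn (fun x : En n => infDist x (frontier D.carrier)) D.carrier := by
    have hconst : IntegrableOn (fun _ : En n => R0 + ‖p₀‖) D.carrier :=
      integrableOn_const hμΩ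
    refine Integrable.mono' hconst (hdc.aestronglyMeasurable.restrict) ?_
    filter_upwards [ae_restrict_mem hopen.measurableSet] with x hx
    rw [Real.norm_eq_abs, abs_of_nonneg infDist_nonneg]
    calc infDist x (frontier D.carrier) ≤ dist x p₀ := infDist_le_dist_of_mem hp₀
      _ ≤ ‖x‖ + ‖p₀‖ := by rw [dist_eq_norm]; exact norm_sub_le _ _
      _ ≤ R0 + ‖p₀‖ := by linarith [hR0 x hx]
  -- integrability of fracLap on the domain
  have hint : IntegrableOn (fun x => fracLap n s u x) D.carrier := by
    rcases lt_trichotomy s (1/2 : ℝ) with hcs | hcs | hcs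
    · -- s < 1/2
      have hconst : IntegrableOn (fun _ : En n => C * 2) D.carrier :=
        integrableOn_const hμΩ
      refine Integrable.mono' hconst hmeasF ?_
      filter_upwards [ae_restrict_mem hopen.measurableSet] with x hx
      have h := (hbd x hx).2.2
      rw [if_pos hcs, if_neg (by linarith : s ≠ 1/2), if_neg (by linarith : ¬ (1/2 : ℝ) < s)] at h
      rw [Real.norm_eq_abs]
      calc |fracLap n s u x| ≤ C * (1 + 1 + 0 + 0) := h
        _ = C * 2 := by ring
    · -- s = 1/2
      have hmhalf : (-1 : ℝ) < -(1/2) := by norm_num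
      have hint2 := PohozaevAux.integrable_rpow_dist hn D hD hmhalf (by norm_num)
      have hGint : IntegrableOn (fun x : En n =>
          C * (1 + (2 * infDist x (frontier D.carrier) ^ (-(1/2) : ℝ)
            + infDist x (frontier D.carrier)))) D.carrier := by
        refine Integrable.const_mul ?_ C
        exact (integrableOn_const hμΩ).add
          ((hint2.const_mul 2).add hdint)
      refine Integrable.mono' hGint hmeasF ?_
      filter_upwards [ae_restrict_mem hopen.measurableSet] with x hx
      have h := (hbd x hx).2.2
      rw [if_neg (by linarith : ¬ s < 1/2), if_pos hcs, if_neg (by linarith : ¬ (1/2:ℝ) < s)] at h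
      rw [Real.norm_eq_abs]
      have hlog := PohozaevAux.abs_log_le (hdpos x hx)
      calc |fracLap n s u x|
          ≤ C * (1 + 0 + |Real.log (infDist x (frontier D.carrier))| + 0) := h
        _ ≤ C * (1 + (2 * infDist x (frontier D.carrier) ^ (-(1/2) : ℝ)
            + infDist x (frontier D.carrier))) := by
            apply mul_le_mul_of_nonneg_left _ hC.le
            linarith
    · -- 1/2 < s
      have ha1 : (-1 : ℝ) < 1 - 2 * s := by linarith [hs.2]
      have ha0 : (1 : ℝ) - 2 * s ≤ 0 := by linarith
      have hint2 := PohozaevAux.integrable_rpow_dist hn D hD ha1 ha0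
      have hGint : IntegrableOn (fun x : En n =>
          C * (1 + infDist x (frontier D.carrier) ^ (1 - 2 * s))) D.carrier := by
        refine Integrable.const_mul ?_ C
        exact (integrableOn_const hμΩ).add hint2
      refine Integrable.mono' hGint hmeasF ?_
      filter_upwards [ae_restrict_mem hopen.measurableSet] with x hx
      have h := (hbd x hx).2.2
      rw [if_neg (by linarith : ¬ s < 1/2), if_neg (by linarith : s ≠ 1/2), if_pos hcs] at h
      rw [Real.norm_eq_abs]
      calc |fracLap n s u x|
          ≤ C * (1 + 0 + 0 + infDist x (frontier D.carrier) ^ (1 - 2 * s)) := h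
        _ = C * (1 + infDist x (frontier D.carrier) ^ (1 - 2 * s)) := by ring
  refine ⟨hint, ?_⟩
  -- dominated convergence
  set R : ℝ := max R0 0 with hRdef
  have hRx : ∀ x ∈ D.carrier, ‖x‖ ≤ R := fun x hx => (hR0 x hx).trans (le_max_left _ _)
  have hR0' : (0:ℝ) ≤ R := le_max_right _ _
  refine tendsto_integral_filter_of_dominated_convergence
    (fun x => ((L : ℝ) * R) * |fracLap n s u x|) ?_ ?_ ?_ ?_
  · -- measurability
    filter_upwards [self_mem_nhdsWithin] with lam _
    exact ((((hucont.comp (continuous_const_smul lam)).sub hucont).div_const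
      (lam - 1)).aestronglyMeasurable.restrict).mul hmeasF
  · -- uniform bound
    filter_upwards [self_mem_nhdsWithin] with lam hlam
    rw [mem_Ioi] at hlam
    filter_upwards [ae_restrict_mem hopen.measurableSet] with x hx
    have hl1 : (0:ℝ) < lam - 1 := by linarith
    have hnum : |u (lam • x) - u x| ≤ (L : ℝ) * ((lam - 1) * ‖x‖) := by
      have h1 := hL.dist_le_mul (lam • x) x
      rw [Real.dist_eq] at h1
      have h2 : dist (lam • x) x = (lam - 1) * ‖x‖ := by
        rw [dist_eq_norm]
        have h3 : lam • x - x = (lam - 1) • x := by rw [sub_smul, one_smul]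
        rw [h3, norm_smul, Real.norm_eq_abs, abs_of_pos hl1]
      rw [h2] at h1
      exact h1
    have hquot : |(u (lam • x) - u x) / (lam - 1)| ≤ (L : ℝ) * R := by
      rw [abs_div, abs_of_pos hl1, div_le_iff₀ hl1]
      calc |u (lam • x) - u x| ≤ (L : ℝ) * ((lam - 1) * ‖x‖) := hnum
        _ ≤ (L : ℝ) * ((lam - 1) * R) :=
            mul_le_mul_of_nonneg_left
              (mul_le_mul_of_nonneg_left (hRx x hx) hl1.le) L.coe_nonneg
        _ = (L : ℝ) * R * (lam - 1) := by ring
    rw [Real.norm_eq_abs, abs_mul]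
    exact mul_le_mul_of_nonneg_right hquot (abs_nonneg _)
  · -- integrability of the bound
    exact (hint.abs.const_mul _)
  · -- pointwise convergence
    filter_upwards [ae_restrict_mem hopen.measurableSet] with x hx
    have hdiff : DifferentiableAt ℝ u x :=
      (hu2.contDiffAt (hopen.mem_nhds hx)).differentiableAt (by norm_num)
    have hpath : HasDerivAt (fun lam : ℝ => lam • x) x 1 := by
      simpa using (hasDerivAt_id (1:ℝ)).smul_const x
    have hfd : HasFDerivAt u (fderiv ℝ u x) ((fun lam : ℝ => lam • x) 1) := by
      rw [show ((fun lam : ℝ => lam • x) 1) = x from one_smul ℝ x]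
      exact hdiff.hasFDerivAt
    have hder : HasDerivAt (fun lam : ℝ => u (lam • x)) (fderiv ℝ u x x) 1 := by
      have := hfd.comp_hasDerivAt 1 hpath
      exact this
    have hslope : Filter.Tendsto (slope (fun lam : ℝ => u (lam • x)) 1)
        (nhdsWithin 1 (Set.Ioi 1)) (nhds (fderiv ℝ u x x)) :=
      (hasDerivAt_iff_tendsto_slope.mp hder).mono_left
        (nhdsWithin_mono _ fun l hl => ne_of_gt hl)
    have heq : ∀ l : ℝ, slope (fun lam : ℝ => u (lam • x)) 1 l
        = (u (l • x) - u x) / (l - 1) := by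
      intro l
      rw [slope_def_field, one_smul]
    have hten := (hslope.congr heq).mul_const (fracLap n s u x)
    rw [PohozaevAux.inner_grad]
    exact hten
end
end

section
/- Let n ≥ 1, s ∈ (0,1), and let u : ℝⁿ → ℝ be bounded and Lipschitz with u = 0 outside some bounded set. Then lim_{ε→0⁺} c_{n,s} ∫_{ℝⁿ} u(x) (∫_{|y−x|≥ε} (u(x) − u(y))/|x−y|^{n+2s} dy) dx = (c_{n,s}/2) ∬_{ℝⁿ×ℝⁿ} (u(x) − u(y))²/|x−y|^{n+2s} dx dy = [u]_s², and this quantity is finite. -/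
open MeasureTheory Real Set Metric Bornology Filter
open scoped RealInnerProductSpace ENNReal NNReal Pointwise

noncomputable section

set_option maxHeartbeats 1000000

namespace SPVaux
open Module

lemma lintegral_fun_norm_addHaar' {E : Type*} [NormedAddCommGroup E] [NormedSpace ℝ E]
    [Nontrivial E] [MeasurableSpace E] [BorelSpace E] [FiniteDimensional ℝ E]
    (μ : Measure E) [μ.IsAddHaarMeasure] (f : ℝ → ℝ≥0∞) (hf : Measurable f) :
    ∫⁻ x, f ‖x‖ ∂μ
      = μ.toSphere Set.univ *
        ∫⁻ y in Set.Ioi (0:ℝ), ENNReal.ofReal (y ^ (finrank ℝ E - 1)) * f y := by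
  calc ∫⁻ x, f ‖x‖ ∂μ = ∫⁻ x, f ‖x‖ ∂(μ.restrict {(0:E)}ᶜ) := by
        rw [MeasureTheory.restrict_compl_singleton]
    _ = ∫⁻ x : ({(0:E)}ᶜ : Set E), f ‖x.1‖ ∂(Measure.comap Subtype.val μ) :=
        (lintegral_subtype_comap (measurableSet_singleton _).compl _).symm
    _ = ∫⁻ p : sphere (0:E) 1 × Ioi (0:ℝ), f p.2
          ∂(μ.toSphere.prod (Measure.volumeIoiPow (finrank ℝ E - 1))) :=
        by have h := (μ.measurePreserving_homeomorphUnitSphereProd).lintegral_comp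
             (f := fun p : (sphere (0:E) 1) × Ioi (0:ℝ) => f p.2)
             (hf.comp (measurable_subtype_coe.comp measurable_snd))
           simpa only [homeomorphUnitSphereProd_apply_snd_coe] using h
    _ = μ.toSphere Set.univ * ∫⁻ y : Ioi (0:ℝ), f y
          ∂(Measure.volumeIoiPow (finrank ℝ E - 1)) := by
        rw [lintegral_prod (fun p : (sphere (0:E) 1) × Ioi (0:ℝ) => f p.2)
            ((hf.comp (measurable_subtype_coe.comp measurable_snd)).aemeasurable)
          ]
        simp only []
        rw [lintegral_const, mul_comm]
    _ = _ := by
        congr 1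
        rw [Measure.volumeIoiPow]
        rw [lintegral_withDensity_eq_lintegral_mul (Measure.comap Subtype.val volume)
            (f := fun r : Ioi (0:ℝ) => ENNReal.ofReal (r.1 ^ (finrank ℝ E - 1)))
            (by fun_prop) (g := fun y : Ioi (0:ℝ) => f y.1) (hf.comp measurable_subtype_coe)]
        exact lintegral_subtype_comap measurableSet_Ioi
            (fun y => ENNReal.ofReal (y ^ (finrank ℝ E - 1)) * f y)

lemma nontrivial_En {n : ℕ} (hn : 0 < n) : Nontrivial (EuclideanSpace ℝ (Fin n)) := by
  refine nontrivial_of_ne (EuclideanSpace.single ⟨0, hn⟩ 1) 0 fun h => ?_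
  simpa using congrArg norm h

lemma aux_norm_rpow_eq {n : ℕ} (hn : 0 < n) {r : ℝ} (S : Set (EuclideanSpace ℝ (Fin n)))
    (I : Set ℝ) (hSI : ∀ z : EuclideanSpace ℝ (Fin n), z ∈ S ↔ ‖z‖ ∈ I) (hI : MeasurableSet I) :
    ∫⁻ z in S, ‖(‖z‖ ^ (-r) : ℝ)‖ₑ ∂(volume : Measure (EuclideanSpace ℝ (Fin n)))
      = (volume : Measure (EuclideanSpace ℝ (Fin n))).toSphere Set.univ *
        ∫⁻ y in Set.Ioi (0:ℝ),
          ENNReal.ofReal (y ^ (n - 1)) *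
            I.indicator (fun y => ENNReal.ofReal (y ^ (-r))) y := by
  haveI := nontrivial_En hn
  have hS : MeasurableSet S := by
    have : S = (fun z : EuclideanSpace ℝ (Fin n) => ‖z‖) ⁻¹' I := by
      ext z; simpa using hSI z
    rw [this]; exact measurable_norm hI
  have hf : Measurable (fun y : ℝ => I.indicator (fun y => ENNReal.ofReal (y ^ (-r))) y) :=
    Measurable.indicator (by fun_prop) hI
  rw [← lintegral_indicator hS]
  rw [show (fun z : EuclideanSpace ℝ (Fin n) =>
        S.indicator (fun z => (‖(‖z‖ ^ (-r) : ℝ)‖ₑ : ℝ≥0∞)) z)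
      = fun z : EuclideanSpace ℝ (Fin n) =>
        I.indicator (fun y => ENNReal.ofReal (y ^ (-r))) ‖z‖ from ?_]
  · rw [lintegral_fun_norm_addHaar' (volume : Measure (EuclideanSpace ℝ (Fin n))) _ hf,
      finrank_euclideanSpace_fin]
  · ext z
    by_cases h : z ∈ S
    · rw [Set.indicator_of_mem h, Set.indicator_of_mem ((hSI z).1 h),
        Real.enorm_eq_ofReal (Real.rpow_nonneg (norm_nonneg _) _)]
    · rw [Set.indicator_of_notMem h, Set.indicator_of_notMem (fun hc => h ((hSI z).2 hc))]

lemma integrableOn_norm_rpow_ball {n : ℕ} (hn : 0 < n) {r : ℝ} (hr : r < n) :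
    IntegrableOn (fun z : EuclideanSpace ℝ (Fin n) => ‖z‖ ^ (-r)) (Metric.ball 0 1) := by
  constructor
  · exact (Measurable.aestronglyMeasurable (by fun_prop)).restrict
  · rw [MeasureTheory.hasFiniteIntegral_def]
    rw [aux_norm_rpow_eq hn (Metric.ball 0 1) (Iio 1)
      (fun z => by simp [mem_ball_zero_iff]) measurableSet_Iio]
    refine ENNReal.mul_lt_top (measure_lt_top _ _) ?_
    have h1d : IntegrableOn (fun y : ℝ => y ^ ((n:ℝ) - 1 - r)) (Ioo (0:ℝ) 1) :=
      (intervalIntegral.integrableOn_Ioo_rpow_iff zero_lt_one).2 (by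
        have : (1:ℝ) ≤ n := by exact_mod_cast hn
        linarith)
    have h2 := h1d.2
    rw [MeasureTheory.hasFiniteIntegral_def] at h2
    have heq : ∫⁻ y in Set.Ioi (0:ℝ),
        ENNReal.ofReal (y ^ (n - 1)) *
          (Iio (1:ℝ)).indicator (fun y => ENNReal.ofReal (y ^ (-r))) y
        = ∫⁻ y in Set.Ioo (0:ℝ) 1, ‖(y ^ ((n:ℝ) - 1 - r) : ℝ)‖ₑ := by
      rw [show (fun y : ℝ => ENNReal.ofReal (y ^ (n - 1)) *
            (Iio (1:ℝ)).indicator (fun y => ENNReal.ofReal (y ^ (-r))) y)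
          = fun y : ℝ => (Iio (1:ℝ)).indicator
            (fun y => ENNReal.ofReal (y ^ (n - 1)) * ENNReal.ofReal (y ^ (-r))) y from ?_]
      · rw [lintegral_indicator measurableSet_Iio, Measure.restrict_restrict measurableSet_Iio,
          Set.Iio_inter_Ioi]
        refine setLIntegral_congr_fun measurableSet_Ioo ?_
        intro y hy
        dsimp only
        rw [Real.enorm_eq_ofReal (Real.rpow_nonneg hy.1.le _),
          ← ENNReal.ofReal_mul (pow_nonneg hy.1.le _)]
        congr 1
        rw [← Real.rpow_natCast y (n-1), ← Real.rpow_add hy.1]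
        congr 1
        have : ((n - 1 : ℕ) : ℝ) = (n : ℝ) - 1 := by
          have : (1:ℕ) ≤ n := hn
          push_cast [this]; ring
        rw [this]; ring
      · ext y
        by_cases h : y ∈ Iio (1:ℝ)
        · rw [Set.indicator_of_mem h, Set.indicator_of_mem h]
        · rw [Set.indicator_of_notMem h, Set.indicator_of_notMem h, mul_zero]
    rw [heq]
    exact h2

lemma integrableOn_norm_rpow_compl {n : ℕ} (hn : 0 < n) {r : ℝ} (hr : (n:ℝ) < r)
    {ε : ℝ} (hε : 0 < ε) :
    IntegrableOn (fun z : EuclideanSpace ℝ (Fin n) => ‖z‖ ^ (-r))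
      {z : EuclideanSpace ℝ (Fin n) | ε ≤ ‖z‖} := by
  constructor
  · exact (Measurable.aestronglyMeasurable (by fun_prop)).restrict
  · rw [MeasureTheory.hasFiniteIntegral_def]
    rw [aux_norm_rpow_eq hn {z : EuclideanSpace ℝ (Fin n) | ε ≤ ‖z‖} (Ici ε)
      (fun z => by simp) measurableSet_Ici]
    refine ENNReal.mul_lt_top (measure_lt_top _ _) ?_
    have h1d : IntegrableOn (fun y : ℝ => y ^ ((n:ℝ) - 1 - r)) (Ioi ε) :=
      integrableOn_Ioi_rpow_of_lt (by linarith) hε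
    have h2 := h1d.2
    rw [MeasureTheory.hasFiniteIntegral_def] at h2
    have heq : ∫⁻ y in Set.Ioi (0:ℝ),
        ENNReal.ofReal (y ^ (n - 1)) *
          (Ici ε).indicator (fun y => ENNReal.ofReal (y ^ (-r))) y
        = ∫⁻ y in Set.Ici ε, ‖(y ^ ((n:ℝ) - 1 - r) : ℝ)‖ₑ := by
      rw [show (fun y : ℝ => ENNReal.ofReal (y ^ (n - 1)) *
            (Ici ε).indicator (fun y => ENNReal.ofReal (y ^ (-r))) y)
          = fun y : ℝ => (Ici ε).indicator
            (fun y => ENNReal.ofReal (y ^ (n - 1)) * ENNReal.ofReal (y ^ (-r))) y from ?_]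
      · rw [lintegral_indicator measurableSet_Ici, Measure.restrict_restrict measurableSet_Ici,
          Set.inter_eq_left.2 (show Ici ε ⊆ Ioi 0 from fun y hy => lt_of_lt_of_le hε hy)]
        refine setLIntegral_congr_fun measurableSet_Ici ?_
        intro y hy
        have hy0 : 0 < y := lt_of_lt_of_le hε hy
        dsimp only
        rw [Real.enorm_eq_ofReal (Real.rpow_nonneg hy0.le _),
          ← ENNReal.ofReal_mul (pow_nonneg hy0.le _)]
        congr 1
        rw [← Real.rpow_natCast y (n-1), ← Real.rpow_add hy0]
        congr 1
        have : ((n - 1 : ℕ) : ℝ) = (n : ℝ) - 1 := by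
          have : (1:ℕ) ≤ n := hn
          push_cast [this]; ring
        rw [this]; ring
      · ext y
        by_cases h : y ∈ Ici ε
        · rw [Set.indicator_of_mem h, Set.indicator_of_mem h]
        · rw [Set.indicator_of_notMem h, Set.indicator_of_notMem h, mul_zero]
    rw [heq]
    rw [Measure.restrict_congr_set Ioi_ae_eq_Ici] at h2
    exact h2

/-- The measurable involution `(x, y) ↦ (x, x - y)`. -/
def mS (n : ℕ) : (EuclideanSpace ℝ (Fin n) × EuclideanSpace ℝ (Fin n)) ≃ᵐ
    (EuclideanSpace ℝ (Fin n) × EuclideanSpace ℝ (Fin n)) where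
  toFun p := (p.1, p.1 - p.2)
  invFun p := (p.1, p.1 - p.2)
  left_inv p := by simp
  right_inv p := by simp
  measurable_toFun := measurable_fst.prodMk (measurable_fst.sub measurable_snd)
  measurable_invFun := measurable_fst.prodMk (measurable_fst.sub measurable_snd)

@[simp] lemma mS_apply (n : ℕ) (p : EuclideanSpace ℝ (Fin n) × EuclideanSpace ℝ (Fin n)) :
    mS n p = (p.1, p.1 - p.2) := rfl

lemma mS_measurePreserving (n : ℕ) :
    MeasurePreserving (mS n) ((volume : Measure (EuclideanSpace ℝ (Fin n))).prod volume)
      ((volume : Measure (EuclideanSpace ℝ (Fin n))).prod volume) := by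
  rw [show (⇑(mS n)) = (Prod.map (id : EuclideanSpace ℝ (Fin n) → EuclideanSpace ℝ (Fin n))
      (Neg.neg : EuclideanSpace ℝ (Fin n) → EuclideanSpace ℝ (Fin n))) ∘
        (fun p : EuclideanSpace ℝ (Fin n) × EuclideanSpace ℝ (Fin n) => (p.1, p.2 - p.1)) by
    funext p; simp [Prod.map, neg_sub]]
  exact ((MeasurePreserving.id volume).prod (Measure.measurePreserving_neg volume)).comp
    (measurePreserving_prod_sub volume volume)

end SPVaux

/-- principal-value representation of `[u]_s²` for bounded Lipschitz
compactly supported `u`: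
`lim_{ε→0⁺} c_{n,s} ∫ u(x) ∫_{|y-x|≥ε} (u(x)-u(y))/|x-y|^{n+2s} dy dx = [u]_s² < ∞`. -/
theorem seminorm_principal_value (n : ℕ) (hn : 1 ≤ n) (s : ℝ)
    (hs : s ∈ Set.Ioo (0:ℝ) 1)
    (u : En n → ℝ) (M : ℝ) (L : ℝ≥0)
    (hM : ∀ x, |u x| ≤ M) (hL : LipschitzWith L u)
    (hsupp : ∃ K : Set (En n), IsBounded K ∧ ∀ x ∉ K, u x = 0) :
    Integrable (fun p : En n × En n =>
      (u p.1 - u p.2) ^ 2 / ‖p.1 - p.2‖ ^ ((n : ℝ) + 2 * s)) ∧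
    Filter.Tendsto
      (fun ε : ℝ => cK n s * ∫ x : En n, u x *
        ∫ y in {y : En n | ε ≤ dist y x}, (u x - u y) / ‖x - y‖ ^ ((n : ℝ) + 2 * s))
      (nhdsWithin 0 (Set.Ioi 0)) (nhds (seminormSsq n s u)) := by
  obtain ⟨hs0, hs1⟩ := hs
  obtain ⟨K, hK, hKz⟩ := hsupp
  obtain ⟨R₀, hR₀⟩ := hK.subset_ball 0
  set R : ℝ := max R₀ 1 with hRdef
  have hR1 : (1:ℝ) ≤ R := le_max_right _ _
  have hR0 : (0:ℝ) < R := lt_of_lt_of_le one_pos hR1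
  have hu0 : ∀ x : En n, R ≤ ‖x‖ → u x = 0 := by
    intro x hx
    refine hKz x fun hxK => ?_
    have h1 := hR₀ hxK
    rw [mem_ball_zero_iff] at h1
    exact absurd ((h1.trans_le (le_max_left _ _)).trans_le hx) (lt_irrefl _)
  have hnpos : 0 < n := hn
  set q : ℝ := (n:ℝ) + 2*s with hqdef
  have hqn : (n:ℝ) < q := by rw [hqdef]; linarith
  have hq2 : q - 2 < (n:ℝ) := by rw [hqdef]; linarith
  have hq0 : 0 < q := lt_of_le_of_lt (Nat.cast_nonneg n) hqn
  have hum : Measurable u := hL.continuous.measurable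
  have hucont : Continuous u := hL.continuous
  have hM0 : 0 ≤ M := le_trans (abs_nonneg _) (hM 0)
  -- the functions
  set G : En n × En n → ℝ := fun p => (u p.1 - u p.2)^2 / ‖p.1 - p.2‖ ^ q with hGdef
  set g : ℝ → En n → ℝ :=
    fun ε w => Set.indicator {w : En n | ε ≤ ‖w‖} (fun w => ‖w‖ ^ (-q)) w with hgdef
  set Gg : ℝ → En n × En n → ℝ :=
    fun ε p => (u p.1 - u p.2)^2 * g ε (p.1 - p.2) with hGgdef
  set F : ℝ → En n × En n → ℝ :=
    fun ε p => u p.1 * (u p.1 - u p.2) * g ε (p.1 - p.2) with hFdef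
  have hg_symm : ∀ ε : ℝ, ∀ w : En n, g ε (-w) = g ε w := by
    intro ε w
    simp only [hgdef]
    simp only [Set.indicator, Set.mem_setOf_eq, norm_neg]
  have hgm : ∀ ε : ℝ, Measurable (g ε) := fun ε =>
    Measurable.indicator (by fun_prop) (measurableSet_le measurable_const measurable_norm)
  have hGmeas : Measurable G := by
    simp only [hGdef]; fun_prop
  have hGgmeas : ∀ ε : ℝ, Measurable (Gg ε) := by
    intro ε
    simp only [hGgdef]
    exact (((hum.comp measurable_fst).sub (hum.comp measurable_snd)).pow_const 2).mul
      ((hgm ε).comp (measurable_fst.sub measurable_snd))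
  -- pointwise domination of Gg by |G|
  have hGg_le : ∀ ε : ℝ, ∀ p : En n × En n, ‖Gg ε p‖ ≤ ‖G p‖ := by
    intro ε p
    have h1 : 0 ≤ g ε (p.1 - p.2) := by
      simp only [hgdef]
      exact Set.indicator_nonneg (fun w _ => Real.rpow_nonneg (norm_nonneg _) _) _
    have h2 : g ε (p.1 - p.2) ≤ ‖p.1 - p.2‖ ^ (-q) := by
      simp only [hgdef]
      by_cases hmem : (p.1 - p.2) ∈ {w : En n | ε ≤ ‖w‖}
      · rw [Set.indicator_of_mem hmem]
      · rw [Set.indicator_of_notMem hmem]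
        exact Real.rpow_nonneg (norm_nonneg _) _
    have hGg_nonneg : 0 ≤ Gg ε p := mul_nonneg (sq_nonneg _) h1
    have hG_eq : G p = (u p.1 - u p.2)^2 * ‖p.1 - p.2‖ ^ (-q) := by
      simp only [hGdef]; rw [ Real.rpow_neg (norm_nonneg _), div_eq_mul_inv]
    have hG_nonneg : 0 ≤ G p := by
      rw [hG_eq]
      exact mul_nonneg (sq_nonneg _) (Real.rpow_nonneg (norm_nonneg _) _)
    rw [Real.norm_eq_abs, abs_of_nonneg hGg_nonneg, Real.norm_eq_abs, abs_of_nonneg hG_nonneg,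
      hGgdef, hG_eq]
    exact mul_le_mul_of_nonneg_left h2 (sq_nonneg _)
  -- basic integrability facts
  have hu2I : Integrable (fun x : En n => u x ^ 2) := by
    refine Continuous.integrable_of_hasCompactSupport (hucont.pow 2) ?_
    refine HasCompactSupport.intro (isCompact_closedBall (0:En n) R) fun x hx => ?_
    rw [mem_closedBall_zero_iff, not_le] at hx
    simp [hu0 x hx.le]
  have hgI : ∀ ε : ℝ, 0 < ε → Integrable (g ε) := by
    intro ε hε
    exact (SPVaux.integrableOn_norm_rpow_compl hnpos hqn hε).integrable_indicator
      (measurableSet_le measurable_const measurable_norm)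
  set H : En n × En n → ℝ := fun p => (u p.1 - u (p.1 - p.2))^2 / ‖p.2‖ ^ q with hHdef
  have hHmeas : Measurable H := by simp only [hHdef]; fun_prop
  have hH_int : Integrable H ((volume : Measure (En n)).prod volume) := by
    rw [integrable_prod_iff' hHmeas.aestronglyMeasurable]
    constructor
    · refine Filter.Eventually.of_forall fun z => ?_
      have hbase : Integrable (fun x : En n => (u x - u (x - z))^2) := by
        refine Continuous.integrable_of_hasCompactSupport
          ((hucont.sub (hucont.comp (continuous_id.sub continuous_const))).pow 2) ?_
        refine HasCompactSupport.intro (isCompact_closedBall (0:En n) (R + ‖z‖))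
          fun x hx => ?_
        rw [mem_closedBall_zero_iff, not_le] at hx
        have h1 : u x = 0 := hu0 x (by linarith [norm_nonneg z])
        have h2 : u (x - z) = 0 := by
          refine hu0 _ ?_
          have := norm_sub_norm_le x z
          linarith
        simp [h1, h2]
      have heq : (fun x : En n => H (x, z)) = fun x => (u x - u (x - z))^2 * (‖z‖ ^ q)⁻¹ := by
        funext x; simp only [hHdef]; ring
      rw [heq]
      exact hbase.mul_const _
    · set vR : ℝ := (volume (ball (0:En n) R)).toReal with hvRdef
      have hvR0 : 0 ≤ vR := ENNReal.toReal_nonneg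
      set ψ : En n → ℝ := fun z => min ((L:ℝ)^2 * ‖z‖^2) ((2*M)^2) / ‖z‖ ^ q
          * (2 * vR) with hψdef
      have hψ_nonneg : ∀ z, 0 ≤ ψ z := by
        intro z
        refine mul_nonneg (div_nonneg (le_min (by positivity) (by positivity)) ?_) (by positivity)
        positivity
      have hbound : ∀ z : En n, ∫ x, ‖H (x, z)‖ ≤ ψ z := by
        intro z
        set Az : Set (En n) := ball (0:En n) R ∪ ball z R with hAzdef
        set C : ℝ := min ((L:ℝ)^2 * ‖z‖^2) ((2*M)^2) / ‖z‖ ^ q with hCdef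
        have hC0 : 0 ≤ C := div_nonneg (le_min (by positivity) (by positivity)) (by positivity)
        have hzero : ∀ x ∉ Az, ‖H (x, z)‖ = 0 := by
          intro x hx
          rw [hAzdef] at hx
          rw [Set.mem_union, not_or, mem_ball_zero_iff, mem_ball, not_lt, not_lt,
            dist_eq_norm] at hx
          have h1 : u x = 0 := hu0 x hx.1
          have h2 : u (x - z) = 0 := hu0 _ hx.2
          simp [hHdef, h1, h2]
        have heq0 : ∫ x, ‖H (x, z)‖ = ∫ x in Az, ‖H (x, z)‖ :=
          (setIntegral_eq_integral_of_forall_compl_eq_zero fun x hx => hzero x hx).symm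
        have hAz_fin : volume Az < ⊤ := lt_of_le_of_lt (measure_union_le _ _)
          (ENNReal.add_lt_top.2 ⟨measure_ball_lt_top, measure_ball_lt_top⟩)
        have hCb : ∀ x ∈ Az, ‖‖H (x, z)‖‖ ≤ C := by
          intro x _
          rw [norm_norm]
          have hnum1 : |u x - u (x - z)| ≤ (L:ℝ) * ‖z‖ := by
            have h := hL.dist_le_mul x (x - z)
            rwa [Real.dist_eq, dist_eq_norm, sub_sub_cancel] at h
          have hnum2 : |u x - u (x - z)| ≤ 2*M := by
            have h1 := hM x; have h2 := hM (x - z)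
            have h3 : |u x - u (x - z)| ≤ |u x| + |u (x - z)| := abs_sub _ _
            linarith
          have hnum : (u x - u (x - z))^2 ≤ min ((L:ℝ)^2 * ‖z‖^2) ((2*M)^2) := by
            rw [le_min_iff]
            constructor
            · have h4 : ((L:ℝ) * ‖z‖)^2 = (L:ℝ)^2 * ‖z‖^2 := by ring
              rw [← h4]
              obtain ⟨ha, hb⟩ := abs_le.1 hnum1
              exact sq_le_sq' ha hb
            · obtain ⟨ha, hb⟩ := abs_le.1 hnum2
              exact sq_le_sq' ha hb
          have hHn : ‖H (x, z)‖ = (u x - u (x - z))^2 / ‖z‖ ^ q := by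
            simp only [hHdef]; rw [ Real.norm_eq_abs,
              abs_of_nonneg (div_nonneg (sq_nonneg _) (Real.rpow_nonneg (norm_nonneg _) _))]
          rw [hHn, hCdef]
          rcases eq_or_ne z 0 with hz | hz
          · simp [hz, Real.zero_rpow (ne_of_gt hq0)]
          · have hzq : 0 < ‖z‖ ^ q := Real.rpow_pos_of_pos (norm_pos_iff.2 hz) q
            exact (div_le_div_iff_of_pos_right hzq).2 hnum
        have hHxm : AEStronglyMeasurable (fun x : En n => ‖H (x, z)‖) (volume.restrict Az) :=
          ((hHmeas.comp (measurable_id.prodMk measurable_const)).norm).aestronglyMeasurable.restrict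
        calc ∫ x, ‖H (x, z)‖ = ∫ x in Az, ‖H (x, z)‖ := heq0
          _ ≤ ‖∫ x in Az, ‖H (x, z)‖‖ := le_abs_self _
          _ ≤ C * (volume Az).toReal := norm_setIntegral_le_of_norm_le_const hAz_fin hCb
          _ ≤ C * (2 * vR) := by
              refine mul_le_mul_of_nonneg_left ?_ hC0
              have h1 : volume Az ≤ 2 * volume (ball (0:En n) R) := by
                refine le_trans (measure_union_le _ _) ?_
                rw [Measure.addHaar_ball_center volume z R, two_mul]
              have h2 := ENNReal.toReal_mono (ENNReal.mul_ne_top ENNReal.ofNat_ne_top measure_ball_lt_top.ne) h1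
              rwa [ENNReal.toReal_mul, ENNReal.toReal_ofNat] at h2
          _ = ψ z := rfl
      have hmeas2 : AEStronglyMeasurable (fun z : En n => ∫ x, ‖H (x, z)‖) volume :=
        ((hHmeas.norm.stronglyMeasurable).integral_prod_left').aestronglyMeasurable
      have hψmeas : Measurable ψ := by simp only [hψdef]; fun_prop
      have hψ_int : Integrable ψ := by
        have huniv : (Set.univ : Set (En n)) = ball (0:En n) 1 ∪ {z : En n | 1 ≤ ‖z‖} := by
          ext z
          simp only [Set.mem_univ, Set.mem_union, mem_ball_zero_iff, Set.mem_setOf_eq, true_iff]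
          exact lt_or_ge _ _
        rw [← integrableOn_univ, huniv]
        refine IntegrableOn.union ?_ ?_
        · refine Integrable.mono'
            (((SPVaux.integrableOn_norm_rpow_ball hnpos hq2).const_mul
              ((L:ℝ)^2 * (2 * vR))))
            hψmeas.aestronglyMeasurable.restrict
            (Filter.Eventually.of_forall fun z => ?_)
          rw [Real.norm_eq_abs, abs_of_nonneg (hψ_nonneg z)]
          rcases eq_or_ne z 0 with hz | hz
          · have : ψ (0 : En n) = 0 := by
              simp only [hψdef]
              simp [Real.zero_rpow (ne_of_gt hq0)]
            rw [hz, this]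
            positivity
          · have hz0 : 0 < ‖z‖ := norm_pos_iff.2 hz
            have key : ‖z‖ ^ (-(q - 2)) = ‖z‖^2 / ‖z‖ ^ q := by
              rw [neg_sub, Real.rpow_sub hz0]
              congr 1
              rw [show (2:ℝ) = ((2:ℕ):ℝ) by norm_num, Real.rpow_natCast]
            simp only [hψdef]
            calc min ((L:ℝ)^2 * ‖z‖^2) ((2*M)^2) / ‖z‖ ^ q * (2 * vR)
                ≤ (L:ℝ)^2 * ‖z‖^2 / ‖z‖ ^ q * (2 * vR) := by
                  refine mul_le_mul_of_nonneg_right ?_ (by positivity)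
                  exact (div_le_div_iff_of_pos_right (Real.rpow_pos_of_pos hz0 q)).2 (min_le_left _ _)
              _ = (L:ℝ)^2 * (2 * vR) * ‖z‖ ^ (-(q - 2)) := by
                  rw [key]; ring
        · refine Integrable.mono'
            (((SPVaux.integrableOn_norm_rpow_compl hnpos hqn one_pos).const_mul
              ((2*M)^2 * (2 * vR))))
            hψmeas.aestronglyMeasurable.restrict ?_
          rw [ae_restrict_iff' (measurableSet_le measurable_const measurable_norm)]
          refine Filter.Eventually.of_forall fun z hz => ?_
          rw [Real.norm_eq_abs, abs_of_nonneg (hψ_nonneg z)]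
          have hz0 : 0 < ‖z‖ := lt_of_lt_of_le one_pos hz
          have key : ‖z‖ ^ (-q) = 1 / ‖z‖ ^ q := by
            rw [Real.rpow_neg (norm_nonneg _), one_div]
          simp only [hψdef]
          calc min ((L:ℝ)^2 * ‖z‖^2) ((2*M)^2) / ‖z‖ ^ q * (2 * vR)
              ≤ (2*M)^2 / ‖z‖ ^ q * (2 * vR) := by
                refine mul_le_mul_of_nonneg_right ?_ (by positivity)
                exact (div_le_div_iff_of_pos_right (Real.rpow_pos_of_pos hz0 q)).2 (min_le_right _ _)
            _ = (2*M)^2 * (2 * vR) * ‖z‖ ^ (-q) := by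
                rw [key]; ring
      refine Integrable.mono' hψ_int hmeas2 (Filter.Eventually.of_forall fun z => ?_)
      rw [Real.norm_eq_abs, abs_of_nonneg (integral_nonneg fun x => norm_nonneg _)]
      exact hbound z
  have hvolprod : (volume : Measure (En n × En n)) =
      (volume : Measure (En n)).prod volume := Measure.volume_eq_prod _ _
  have hG_int : Integrable G := by
    rw [hvolprod]
    refine ((SPVaux.mS_measurePreserving n).integrable_comp_emb
      (SPVaux.mS n).measurableEmbedding).1 ?_
    have hcomp : (G ∘ (SPVaux.mS n)) = H := by
      funext p
      simp only [Function.comp_apply, SPVaux.mS_apply, hGdef, hHdef, sub_sub_cancel]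
    rw [hcomp]
    exact hH_int
  have hGg_int : ∀ ε : ℝ, 0 < ε → Integrable (Gg ε) := by
    intro ε hε
    refine Integrable.mono' hG_int.norm (hGgmeas ε).aestronglyMeasurable
      (Filter.Eventually.of_forall fun p => ?_)
    exact hGg_le ε p
  have hP1_int : ∀ ε : ℝ, 0 < ε →
      Integrable (fun p : En n × En n => u p.1 ^ 2 * g ε (p.1 - p.2)) := by
    intro ε hε
    rw [hvolprod]
    refine ((SPVaux.mS_measurePreserving n).integrable_comp_emb
      (SPVaux.mS n).measurableEmbedding).1 ?_
    have hcomp : ((fun p : En n × En n => u p.1 ^ 2 * g ε (p.1 - p.2)) ∘ (SPVaux.mS n))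
        = fun p : En n × En n => u p.1 ^ 2 * g ε p.2 := by
      funext p
      simp only [Function.comp_apply, SPVaux.mS_apply, sub_sub_cancel]
    rw [hcomp]
    exact hu2I.mul_prod (hgI ε hε)
  have hP2_int : ∀ ε : ℝ, 0 < ε →
      Integrable (fun p : En n × En n => u p.2 ^ 2 * g ε (p.1 - p.2)) := by
    intro ε hε
    rw [hvolprod]
    have hcomp : (fun p : En n × En n => u p.2 ^ 2 * g ε (p.1 - p.2))
        = (fun p : En n × En n => u p.1 ^ 2 * g ε (p.1 - p.2)) ∘ Prod.swap := by
      funext p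
      simp only [Function.comp_apply, Prod.fst_swap, Prod.snd_swap]
      rw [show p.2 - p.1 = -(p.1 - p.2) by abel, hg_symm]
    rw [hcomp]
    refine ((Measure.measurePreserving_swap (μ := (volume : Measure (En n))) (ν := volume)).integrable_comp_emb
      MeasurableEquiv.prodComm.measurableEmbedding
      (g := fun p : En n × En n => u p.1 ^ 2 * g ε (p.1 - p.2))).2 ?_
    rw [← hvolprod]
    exact hP1_int ε hε
  have hF_int : ∀ ε : ℝ, 0 < ε → Integrable (F ε) := by
    intro ε hε
    have hrepr : F ε = fun p : En n × En n => (2⁻¹ : ℝ) *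
        (Gg ε p + u p.1 ^ 2 * g ε (p.1 - p.2) - u p.2 ^ 2 * g ε (p.1 - p.2)) := by
      funext p
      simp only [hFdef, hGgdef]
      ring
    rw [hrepr]
    exact (((hGg_int ε hε).add (hP1_int ε hε)).sub (hP2_int ε hε)).const_mul _
  have hFswap_int : ∀ ε : ℝ, 0 < ε →
      Integrable (fun p : En n × En n => F ε (Prod.swap p)) := by
    intro ε hε
    rw [hvolprod]
    refine ((Measure.measurePreserving_swap (μ := (volume : Measure (En n))) (ν := volume)).integrable_comp_emb
      MeasurableEquiv.prodComm.measurableEmbedding (g := F ε)).2 ?_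
    rw [← hvolprod]
    exact hF_int ε hε
  have key_eq : ∀ ε : ℝ, 0 < ε →
      (cK n s * ∫ x : En n, u x *
        ∫ y in {y : En n | ε ≤ dist y x}, (u x - u y) / ‖x - y‖ ^ q)
      = (cK n s / 2) * ∫ p : En n × En n, Gg ε p := by
    intro ε hε
    have hSmeas : ∀ x : En n, MeasurableSet {y : En n | ε ≤ dist y x} :=
      fun x => measurableSet_le measurable_const
        ((continuous_id.dist continuous_const).measurable)
    have step1 : (fun x : En n => u x *
          ∫ y in {y : En n | ε ≤ dist y x}, (u x - u y) / ‖x - y‖ ^ q)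
        = fun x : En n => ∫ y : En n, F ε (x, y) := by
      funext x
      rw [show (u x * ∫ y in {y : En n | ε ≤ dist y x}, (u x - u y) / ‖x - y‖ ^ q)
          = ∫ y in {y : En n | ε ≤ dist y x}, u x * ((u x - u y) / ‖x - y‖ ^ q)
          from (integral_const_mul _ _).symm]
      rw [← integral_indicator (hSmeas x)]
      congr 1
      funext y
      by_cases hy : y ∈ {y : En n | ε ≤ dist y x}
      · rw [Set.indicator_of_mem hy]
        have hmem : (x - y) ∈ {w : En n | ε ≤ ‖w‖} := by
          simp only [Set.mem_setOf_eq] at hy ⊢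
          rwa [dist_eq_norm, norm_sub_rev] at hy
        simp only [hFdef, hgdef]
        rw [Set.indicator_of_mem hmem, Real.rpow_neg (norm_nonneg _)]
        ring
      · rw [Set.indicator_of_notMem hy]
        have hmem : (x - y) ∉ {w : En n | ε ≤ ‖w‖} := by
          simp only [Set.mem_setOf_eq] at hy ⊢
          rwa [dist_eq_norm, norm_sub_rev] at hy
        simp only [hFdef, hgdef]
        rw [Set.indicator_of_notMem hmem, mul_zero]
    have step2 : (∫ x : En n, ∫ y : En n, F ε (x, y)) = ∫ p : En n × En n, F ε p := by
      have h := integral_integral (f := fun (x y : En n) => F ε (x, y))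
        (by rw [← hvolprod]; exact hF_int ε hε)
      rw [h, ← hvolprod]
    have step3 : (∫ p : En n × En n, F ε p) = 2⁻¹ * ∫ p : En n × En n, Gg ε p := by
      have hswap : (∫ p : En n × En n, F ε (Prod.swap p)) = ∫ p : En n × En n, F ε p := by
        rw [hvolprod]
        exact (Measure.measurePreserving_swap (μ := (volume : Measure (En n))) (ν := volume)).integral_comp
          MeasurableEquiv.prodComm.measurableEmbedding (F ε)
      have hsum : (∫ p : En n × En n, (F ε p + F ε (Prod.swap p)))
          = ∫ p : En n × En n, Gg ε p := by
        congr 1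
        funext p
        simp only [hFdef, hGgdef, Prod.fst_swap, Prod.snd_swap]
        rw [show p.2 - p.1 = -(p.1 - p.2) by abel, hg_symm]
        ring
      have hadd : (∫ p : En n × En n, (F ε p + F ε (Prod.swap p)))
          = (∫ p : En n × En n, F ε p) + ∫ p : En n × En n, F ε (Prod.swap p) :=
        integral_add (hF_int ε hε) (hFswap_int ε hε)
      have h2 : (∫ p : En n × En n, Gg ε p)
          = (∫ p : En n × En n, F ε p) + ∫ p : En n × En n, F ε p := by
        rw [← hsum, hadd, hswap]
      linarith [h2]
    rw [step1, step2, step3]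
    ring
  have hlim : Tendsto (fun ε : ℝ => (cK n s / 2) * ∫ p : En n × En n, Gg ε p)
      (nhdsWithin 0 (Set.Ioi 0)) (nhds (seminormSsq n s u)) := by
    have hGG : Tendsto (fun ε : ℝ => ∫ p : En n × En n, Gg ε p)
        (nhdsWithin 0 (Set.Ioi 0)) (nhds (∫ p : En n × En n, G p)) := by
      refine tendsto_integral_filter_of_dominated_convergence (fun p => ‖G p‖) ?_ ?_
        hG_int.norm ?_
      · filter_upwards [self_mem_nhdsWithin] with ε hε
        exact (hGgmeas ε).aestronglyMeasurable
      · filter_upwards [self_mem_nhdsWithin] with ε hε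
        exact Filter.Eventually.of_forall fun p => hGg_le ε p
      · refine Filter.Eventually.of_forall fun p => ?_
        by_cases hw : p.1 - p.2 = 0
        · have hGp : G p = 0 := by
            have hp : p.1 = p.2 := sub_eq_zero.1 hw
            simp [hGdef, hp]
          rw [hGp]
          refine Tendsto.congr' ?_ tendsto_const_nhds
          filter_upwards [self_mem_nhdsWithin] with ε hε
          have hnm : (p.1 - p.2) ∉ {w : En n | ε ≤ ‖w‖} := by
            simp only [Set.mem_setOf_eq, hw, norm_zero, not_le]
            exact hε
          simp only [hGgdef, hgdef]
          rw [Set.indicator_of_notMem hnm, mul_zero]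
        · have hw' : 0 < ‖p.1 - p.2‖ := norm_pos_iff.2 hw
          refine Tendsto.congr' ?_ (tendsto_const_nhds (x := G p))
          have h1 : ∀ᶠ ε in nhdsWithin (0:ℝ) (Set.Ioi 0), ε < ‖p.1 - p.2‖ :=
            Filter.Eventually.filter_mono nhdsWithin_le_nhds (Iio_mem_nhds hw')
          filter_upwards [h1] with ε hε
          have hnm : (p.1 - p.2) ∈ {w : En n | ε ≤ ‖w‖} := le_of_lt hε
          simp only [hGgdef, hgdef, hGdef]
          rw [Set.indicator_of_mem hnm, Real.rpow_neg (norm_nonneg _), div_eq_mul_inv]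
    have hsemi : seminormSsq n s u = (cK n s / 2) * ∫ p : En n × En n, G p := rfl
    rw [hsemi]
    exact hGG.const_mul _
  refine ⟨hG_int, ?_⟩
  refine Tendsto.congr' ?_ hlim
  filter_upwards [self_mem_nhdsWithin] with ε hε
  exact (key_eq ε hε).symm
end
end

section
/- Let n ≥ 1, s ∈ (0,1), let Ω ⊂ ℝⁿ be a bounded open set containing the origin such that dist(y, (2Ω)ᶜ is bounded away from Ω, i.e. there exists κ > 0 with |x − y| ≥ κ for all y ∈ Ω and all x ∉ 2Ω (as holds when Ω is a bounded C² domain strictly star-shaped with respect to the origin, where 2Ω = {2z : z ∈ Ω}). Let u : ℝⁿ → ℝ be bounded and Lipschitz with u = 0 in Ωᶜ, and let 𝔤 = (−Δ)^{s/2}u. Then for every x ∉ 2Ω one has 𝔤(x) = −c_{n,s/2} ∫_Ω u(y)/|x−y|^{n+s} dy, 𝔤 is twice continuously differentiable at x, and there exists a constant C (independent of x) such that |𝔤(x)| ≤ C|x|^{−n−s}, |∇𝔤(x)| ≤ C|x|^{−n−s−1}, and |D²𝔤(x)| ≤ C|x|^{−n−s−2}. -/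
open MeasureTheory Real Set Metric Bornology Filter
open scoped RealInnerProductSpace ENNReal NNReal Pointwise

set_option maxHeartbeats 1000000
set_option synthInstance.maxHeartbeats 400000
noncomputable section

namespace FracAux

variable {n : ℕ}

/-- The real inner product, as a continuous linear map into the dual. -/
def inR (n : ℕ) : En n →L[ℝ] En n →L[ℝ] ℝ := innerSL ℝ

lemma inR_apply (z : En n) : inR n z = innerSL ℝ z := rfl

lemma norm_inR_apply (z : En n) : ‖inR n z‖ = ‖z‖ := innerSL_apply_norm (𝕜 := ℝ) z

lemma norm_inR_le : ‖inR n‖ ≤ 1 := norm_innerSL_le ℝ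

def sqK (n : ℕ) (e : ℝ) (z : En n) : ℝ := (‖z‖ ^ 2) ^ e

def sqK₁ (n : ℕ) (e : ℝ) (z : En n) : En n →L[ℝ] ℝ :=
  (2 * e * (‖z‖ ^ 2) ^ (e - 1)) • inR n z

def sqK₂ (n : ℕ) (e : ℝ) (z : En n) : En n →L[ℝ] En n →L[ℝ] ℝ :=
  (2 * e * (‖z‖ ^ 2) ^ (e - 1)) • inR n
    + ((4 * e * (e - 1) * (‖z‖ ^ 2) ^ (e - 2)) • inR n z).smulRight (inR n z)

lemma sqK_eq (e : ℝ) (z : En n) : sqK n e z = ‖z‖ ^ (2 * e) := by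
  rw [sqK, ← Real.rpow_natCast ‖z‖ 2, ← Real.rpow_mul (norm_nonneg z)]
  norm_num

lemma sqK_symm (e : ℝ) (a b : En n) : sqK n e (a - b) = sqK n e (b - a) := by
  simp [sqK, norm_sub_rev]

lemma hasFDerivAt_sqK (e : ℝ) {z : En n} (hz : z ≠ 0) :
    HasFDerivAt (sqK n e) (sqK₁ n e z) z := by
  have hz2 : (‖z‖ : ℝ) ^ 2 ≠ 0 := by
    have : ‖z‖ ≠ 0 := norm_ne_zero_iff.2 hz
    positivity
  have h1 : HasFDerivAt (fun x : En n => ‖x‖ ^ 2) (2 • innerSL ℝ z) z :=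
    (hasStrictFDerivAt_norm_sq z).hasFDerivAt
  have h2 : HasDerivAt (fun t : ℝ => t ^ e) (e * (‖z‖ ^ 2) ^ (e - 1)) (‖z‖ ^ 2) :=
    Real.hasDerivAt_rpow_const (Or.inl hz2)
  have h3 := h2.comp_hasFDerivAt z h1
  refine h3.congr_fderiv ?_
  ext v
  simp [sqK₁, inR_apply, two_smul]
  ring

lemma hasFDerivAt_sqK₁ (e : ℝ) {z : En n} (hz : z ≠ 0) :
    HasFDerivAt (sqK₁ n e) (sqK₂ n e z) z := by
  have hz2 : (‖z‖ : ℝ) ^ 2 ≠ 0 := by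
    have : ‖z‖ ≠ 0 := norm_ne_zero_iff.2 hz
    positivity
  have hc : HasFDerivAt (fun x : En n => 2 * e * (‖x‖ ^ 2) ^ (e - 1))
      ((4 * e * (e - 1) * (‖z‖ ^ 2) ^ (e - 2)) • inR n z) z := by
    have h1 : HasFDerivAt (fun x : En n => ‖x‖ ^ 2) (2 • innerSL ℝ z) z :=
      (hasStrictFDerivAt_norm_sq z).hasFDerivAt
    have h2 : HasDerivAt (fun t : ℝ => t ^ (e - 1)) ((e - 1) * (‖z‖ ^ 2) ^ (e - 1 - 1)) (‖z‖ ^ 2) :=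
      Real.hasDerivAt_rpow_const (Or.inl hz2)
    have h3 := (h2.comp_hasFDerivAt z h1).const_mul (2 * e)
    refine h3.congr_fderiv ?_
    ext v
    simp [inR_apply, two_smul]
    rw [show e - 1 - 1 = e - 2 by ring]
    ring
  have hA : HasFDerivAt (fun x : En n => inR n x) (inR n) z := (inR n).hasFDerivAt
  exact hc.smul hA

lemma continuousAt_sqK₂ (e : ℝ) {z : En n} (hz : z ≠ 0) : ContinuousAt (sqK₂ n e) z := by
  have hz2 : (‖z‖ : ℝ) ^ 2 ≠ 0 := by
    have : ‖z‖ ≠ 0 := norm_ne_zero_iff.2 hz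
    positivity
  have hnc : Continuous fun x : En n => (‖x‖ : ℝ) ^ 2 := continuous_norm.pow 2
  have hr1 : ContinuousAt (fun x : En n => ((‖x‖ ^ 2 : ℝ)) ^ (e - 1)) z :=
    ContinuousAt.comp (x := z) (g := fun t : ℝ => t ^ (e - 1))
      (Real.continuousAt_rpow_const _ _ (Or.inl hz2)) hnc.continuousAt
  have hr2 : ContinuousAt (fun x : En n => ((‖x‖ ^ 2 : ℝ)) ^ (e - 2)) z :=
    ContinuousAt.comp (x := z) (g := fun t : ℝ => t ^ (e - 2))
      (Real.continuousAt_rpow_const _ _ (Or.inl hz2)) hnc.continuousAt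
  have hc1 : ContinuousAt (fun x : En n => 2 * e * (‖x‖ ^ 2) ^ (e - 1)) z :=
    continuousAt_const.mul hr1
  have hc2 : ContinuousAt (fun x : En n => 4 * e * (e - 1) * (‖x‖ ^ 2) ^ (e - 2)) z :=
    continuousAt_const.mul hr2
  have hinner : Continuous fun x : En n => inR n x := (inR n).continuous
  have hsr : Continuous fun pq : (En n →L[ℝ] ℝ) × (En n →L[ℝ] ℝ) =>
      pq.1.smulRight pq.2 := (isBoundedBilinearMap_smulRight (𝕜 := ℝ)).continuous
  have h2 : ContinuousAt
      (fun x : En n => ((4 * e * (e - 1) * (‖x‖ ^ 2) ^ (e - 2)) • inR n x).smulRight (inR n x)) z :=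
    hsr.continuousAt.comp (x := z)
      (f := fun x : En n => (((4 * e * (e - 1) * (‖x‖ ^ 2) ^ (e - 2)) • inR n x), inR n x)) ((hc2.smul hinner.continuousAt).prodMk hinner.continuousAt)
  haveI : ContinuousAdd (En n →L[ℝ] En n →L[ℝ] ℝ) :=
    @IsTopologicalAddGroup.toContinuousAdd (En n →L[ℝ] En n →L[ℝ] ℝ) _ _
      ContinuousLinearMap.topologicalAddGroup
  exact (hc1.smul continuousAt_const).add h2

lemma norm_sqK_le (e : ℝ) (he : e ≤ 0) {d : ℝ} (hd : 0 < d) {z : En n} (hz : d ≤ ‖z‖) :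
    ‖sqK n e z‖ ≤ d ^ (2 * e) := by
  have h : ‖sqK n e z‖ = ‖z‖ ^ (2 * e) := by
    rw [Real.norm_eq_abs, sqK_eq, abs_of_nonneg (Real.rpow_nonneg (norm_nonneg z) _)]
  rw [h]
  exact Real.rpow_le_rpow_of_nonpos hd hz (by linarith)

lemma norm_sqK₁_le (e : ℝ) (he : e ≤ 0) {d : ℝ} (hd : 0 < d) {z : En n} (hz : d ≤ ‖z‖) :
    ‖sqK₁ n e z‖ ≤ 2 * |e| * d ^ (2 * e - 1) := by
  have hz0 : (0 : ℝ) < ‖z‖ := lt_of_lt_of_le hd hz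
  have ht : ((‖z‖ ^ 2 : ℝ)) ^ (e - 1) = ‖z‖ ^ (2 * e - 2) := by
    rw [show ((‖z‖ ^ 2 : ℝ)) ^ (e - 1) = sqK n (e - 1) z from rfl, sqK_eq]
    congr 1; ring
  have h3 := Real.rpow_le_rpow_of_nonpos hd hz (show 2 * e - 1 ≤ 0 by linarith)
  calc ‖sqK₁ n e z‖ ≤ ‖(2 * e * (‖z‖ ^ 2) ^ (e - 1) : ℝ)‖ * ‖inR n z‖ :=
        ContinuousLinearMap.opNorm_smul_le _ _
    _ = 2 * |e| * ‖z‖ ^ (2 * e - 1) := by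
        rw [Real.norm_eq_abs, norm_inR_apply, ht, abs_mul, abs_mul, abs_two,
          abs_of_nonneg (Real.rpow_nonneg (norm_nonneg z) _), mul_assoc,
          show (2 * e - 1 : ℝ) = (2 * e - 2) + 1 by ring, Real.rpow_add_one hz0.ne']
    _ ≤ 2 * |e| * d ^ (2 * e - 1) := mul_le_mul_of_nonneg_left h3 (by positivity)

lemma norm_sqK₂_le (e : ℝ) (he : e ≤ 0) {d : ℝ} (hd : 0 < d) {z : En n} (hz : d ≤ ‖z‖) :
    ‖sqK₂ n e z‖ ≤ (2 * |e| + 4 * |e| * |e - 1|) * d ^ (2 * e - 2) := by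
  have hz0 : (0 : ℝ) < ‖z‖ := lt_of_lt_of_le hd hz
  have ht1 : ((‖z‖ ^ 2 : ℝ)) ^ (e - 1) = ‖z‖ ^ (2 * e - 2) := by
    rw [show ((‖z‖ ^ 2 : ℝ)) ^ (e - 1) = sqK n (e - 1) z from rfl, sqK_eq]
    congr 1; ring
  have ht2 : ((‖z‖ ^ 2 : ℝ)) ^ (e - 2) = ‖z‖ ^ (2 * e - 4) := by
    rw [show ((‖z‖ ^ 2 : ℝ)) ^ (e - 2) = sqK n (e - 2) z from rfl, sqK_eq]
    congr 1; ring
  have hrn : ∀ a : ℝ, (0:ℝ) ≤ ‖z‖ ^ a := fun a => Real.rpow_nonneg (norm_nonneg z) a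
  have hA : ‖(2 * e * (‖z‖ ^ 2) ^ (e - 1)) • inR n‖ ≤ 2 * |e| * ‖z‖ ^ (2 * e - 2) := by
    calc ‖(2 * e * (‖z‖ ^ 2) ^ (e - 1)) • inR n‖
        ≤ ‖(2 * e * (‖z‖ ^ 2) ^ (e - 1) : ℝ)‖ * ‖inR n‖ :=
          ContinuousLinearMap.opNorm_smul_le _ _
      _ = 2 * |e| * ‖z‖ ^ (2 * e - 2) * ‖inR n‖ := by
          rw [Real.norm_eq_abs, ht1, abs_mul, abs_mul, abs_two, abs_of_nonneg (hrn _)]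
      _ ≤ 2 * |e| * ‖z‖ ^ (2 * e - 2) * 1 :=
          mul_le_mul_of_nonneg_left norm_inR_le (by positivity)
      _ = 2 * |e| * ‖z‖ ^ (2 * e - 2) := by ring
  have hB : ‖((4 * e * (e - 1) * (‖z‖ ^ 2) ^ (e - 2)) • inR n z).smulRight (inR n z)‖
      ≤ 4 * |e| * |e - 1| * ‖z‖ ^ (2 * e - 2) := by
    calc ‖((4 * e * (e - 1) * (‖z‖ ^ 2) ^ (e - 2)) • inR n z).smulRight (inR n z)‖
        = ‖(4 * e * (e - 1) * (‖z‖ ^ 2) ^ (e - 2)) • inR n z‖ * ‖inR n z‖ :=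
          ContinuousLinearMap.norm_smulRight_apply _ _
      _ ≤ (‖(4 * e * (e - 1) * (‖z‖ ^ 2) ^ (e - 2) : ℝ)‖ * ‖inR n z‖) * ‖inR n z‖ := by
          refine mul_le_mul_of_nonneg_right ?_ (norm_nonneg _)
          exact ContinuousLinearMap.opNorm_smul_le _ _
      _ = 4 * |e| * |e - 1| * ‖z‖ ^ (2 * e - 2) := by
          rw [Real.norm_eq_abs, norm_inR_apply, ht2, abs_mul, abs_mul, abs_mul,
            abs_of_nonneg (hrn _), show |(4:ℝ)| = 4 by norm_num,
            show (2 * e - 2 : ℝ) = ((2 * e - 4) + 1) + 1 by ring,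
            Real.rpow_add_one hz0.ne', Real.rpow_add_one hz0.ne']
          ring
  calc ‖sqK₂ n e z‖ ≤ 2 * |e| * ‖z‖ ^ (2 * e - 2) + 4 * |e| * |e - 1| * ‖z‖ ^ (2 * e - 2) := by
        have hdef : sqK₂ n e z = (2 * e * (‖z‖ ^ 2) ^ (e - 1)) • inR n
            + ((4 * e * (e - 1) * (‖z‖ ^ 2) ^ (e - 2)) • inR n z).smulRight (inR n z) := rfl
        rw [hdef]
        exact le_trans (norm_add_le ((2 * e * (‖z‖ ^ 2) ^ (e - 1)) • inR n)
          (((4 * e * (e - 1) * (‖z‖ ^ 2) ^ (e - 2)) • inR n z).smulRight (inR n z)))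
          (add_le_add hA hB)
    _ = (2 * |e| + 4 * |e| * |e - 1|) * ‖z‖ ^ (2 * e - 2) := by ring
    _ ≤ (2 * |e| + 4 * |e| * |e - 1|) * d ^ (2 * e - 2) :=
        mul_le_mul_of_nonneg_left
          (Real.rpow_le_rpow_of_nonpos hd hz (by linarith)) (by positivity)

section Parametric

variable {E : Type*} [NormedAddCommGroup E] [NormedSpace ℝ E]

lemma norm_smul_abs (a : ℝ) (x : E) : ‖a • x‖ = |a| * ‖x‖ :=
  (norm_smul a x).trans (by rw [Real.norm_eq_abs])

lemma aesm_kernel {Ω : Set (En n)} (hΩm : MeasurableSet Ω) {u : En n → ℝ} (hu : Continuous u)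
    {k : En n → E} (hkc : ∀ z : En n, z ≠ 0 → ContinuousAt k z)
    {x : En n} (hx : ∀ y ∈ Ω, x - y ≠ 0) :
    AEStronglyMeasurable (fun y => u y • k (x - y)) (volume.restrict Ω) := by
  refine ContinuousOn.aestronglyMeasurable (fun y hy => ?_) hΩm
  have h1 : ContinuousAt (fun y : En n => k (x - y)) y :=
    ContinuousAt.comp (x := y) (g := k) (hkc _ (hx y hy))
      ((continuous_const.sub continuous_id).continuousAt)
  exact (hu.continuousAt.smul h1).continuousWithinAt

lemma hasFDerivAt_int_kernel {Ω : Set (En n)} (hΩm : MeasurableSet Ω) (hfin : volume Ω < ⊤)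
    {u : En n → ℝ} (hu : Continuous u) {M : ℝ} (hM : ∀ x, |u x| ≤ M)
    {k : En n → E} {k' : En n → En n →L[ℝ] E}
    (hk : ∀ z : En n, z ≠ 0 → HasFDerivAt k (k' z) z)
    (hk'c : ∀ z : En n, z ≠ 0 → ContinuousAt k' z)
    {d : ℝ} (hd : 0 < d) {Ck Ck' : ℝ} (hCk0 : 0 ≤ Ck) (hCk'0 : 0 ≤ Ck')
    (hCk : ∀ z : En n, d / 2 ≤ ‖z‖ → ‖k z‖ ≤ Ck)
    (hCk' : ∀ z : En n, d / 2 ≤ ‖z‖ → ‖k' z‖ ≤ Ck')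
    {x₀ : En n} (hx₀ : ∀ y ∈ Ω, d ≤ ‖x₀ - y‖) :
    HasFDerivAt (fun x => ∫ y in Ω, u y • k (x - y)) (∫ y in Ω, u y • k' (x₀ - y)) x₀ := by
  haveI : IsFiniteMeasure (volume.restrict Ω) :=
    ⟨by rwa [Measure.restrict_apply_univ]⟩
  have hM0 : (0:ℝ) ≤ M := le_trans (abs_nonneg _) (hM 0)
  have hball : ∀ x' ∈ ball x₀ (d / 2), ∀ y ∈ Ω, d / 2 ≤ ‖x' - y‖ := by
    intro x' hx' y hy
    have h1 := hx₀ y hy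
    have h2 : dist x' x₀ < d / 2 := mem_ball.1 hx'
    have h3 : dist x₀ y ≤ dist x₀ x' + dist x' y := dist_triangle _ _ _
    rw [dist_eq_norm] at h2 h3
    rw [dist_eq_norm, dist_eq_norm] at h3
    have h4 : ‖x₀ - x'‖ = ‖x' - x₀‖ := norm_sub_rev _ _
    linarith
  have hne : ∀ x' ∈ ball x₀ (d / 2), ∀ y ∈ Ω, x' - y ≠ 0 := by
    intro x' hx' y hy h
    have h5 := hball x' hx' y hy
    rw [h, norm_zero] at h5
    linarith
  refine hasFDerivAt_integral_of_dominated_of_fderiv_le (F' := fun x y => u y • k' (x - y))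
    (bound := fun _ => M * Ck') (ball_mem_nhds x₀ (half_pos hd)) ?_ ?_ ?_ ?_ ?_ ?_
  · filter_upwards [ball_mem_nhds x₀ (half_pos hd)] with x' hx'
    exact aesm_kernel hΩm hu (fun z hz => (hk z hz).continuousAt) (hne x' hx')
  · refine Integrable.mono' (integrable_const (M * Ck))
      (aesm_kernel hΩm hu (fun z hz => (hk z hz).continuousAt)
        (hne x₀ (mem_ball_self (half_pos hd)))) ?_
    refine (ae_restrict_iff' hΩm).2 (ae_of_all _ fun y hy => ?_)
    refine le_trans (le_of_eq (norm_smul_abs _ _)) ?_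
    exact mul_le_mul (hM y) (hCk _ (hball x₀ (mem_ball_self (half_pos hd)) y hy))
      (norm_nonneg _) hM0
  · exact aesm_kernel hΩm hu hk'c (hne x₀ (mem_ball_self (half_pos hd)))
  · refine (ae_restrict_iff' hΩm).2 (ae_of_all _ fun y hy x' hx' => ?_)
    refine le_trans (ContinuousLinearMap.opNorm_smul_le (u y) (k' (x' - y))) ?_
    rw [Real.norm_eq_abs]
    exact mul_le_mul (hM y) (hCk' _ (hball x' hx' y hy)) (norm_nonneg _) hM0
  · exact integrable_const _
  · refine (ae_restrict_iff' hΩm).2 (ae_of_all _ fun y hy x' hx' => ?_)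
    have h1 : HasFDerivAt (fun x : En n => x - y) (ContinuousLinearMap.id ℝ (En n)) x' :=
      (hasFDerivAt_id x').sub_const y
    have h2 := ((hk _ (hne x' hx' y hy)).comp x' h1).const_smul (u y)
    simpa [Function.comp_def, Pi.smul_def] using h2

lemma continuousAt_int_kernel {Ω : Set (En n)} (hΩm : MeasurableSet Ω) (hfin : volume Ω < ⊤)
    {u : En n → ℝ} (hu : Continuous u) {M : ℝ} (hM : ∀ x, |u x| ≤ M)
    {k : En n → E} (hkc : ∀ z : En n, z ≠ 0 → ContinuousAt k z)
    {d : ℝ} (hd : 0 < d) {Ck : ℝ}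
    (hCk : ∀ z : En n, d / 2 ≤ ‖z‖ → ‖k z‖ ≤ Ck)
    {x₀ : En n} (hx₀ : ∀ y ∈ Ω, d ≤ ‖x₀ - y‖) :
    ContinuousAt (fun x => ∫ y in Ω, u y • k (x - y)) x₀ := by
  haveI : IsFiniteMeasure (volume.restrict Ω) :=
    ⟨by rwa [Measure.restrict_apply_univ]⟩
  have hM0 : (0:ℝ) ≤ M := le_trans (abs_nonneg _) (hM 0)
  have hball : ∀ x' ∈ ball x₀ (d / 2), ∀ y ∈ Ω, d / 2 ≤ ‖x' - y‖ := by
    intro x' hx' y hy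
    have h1 := hx₀ y hy
    have h2 : dist x' x₀ < d / 2 := mem_ball.1 hx'
    have h3 : dist x₀ y ≤ dist x₀ x' + dist x' y := dist_triangle _ _ _
    rw [dist_eq_norm] at h2 h3
    rw [dist_eq_norm, dist_eq_norm] at h3
    have h4 : ‖x₀ - x'‖ = ‖x' - x₀‖ := norm_sub_rev _ _
    linarith
  have hne : ∀ x' ∈ ball x₀ (d / 2), ∀ y ∈ Ω, x' - y ≠ 0 := by
    intro x' hx' y hy h
    have h5 := hball x' hx' y hy
    rw [h, norm_zero] at h5
    linarith
  refine continuousAt_of_dominated (bound := fun _ => M * Ck) ?_ ?_ (integrable_const _) ?_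
  · filter_upwards [ball_mem_nhds x₀ (half_pos hd)] with x' hx'
    exact aesm_kernel hΩm hu hkc (hne x' hx')
  · filter_upwards [ball_mem_nhds x₀ (half_pos hd)] with x' hx'
    refine (ae_restrict_iff' hΩm).2 (ae_of_all _ fun y hy => ?_)
    refine le_trans (le_of_eq (norm_smul_abs _ _)) ?_
    exact mul_le_mul (hM y) (hCk _ (hball x' hx' y hy)) (norm_nonneg _) hM0
  · refine (ae_restrict_iff' hΩm).2 (ae_of_all _ fun y hy => ?_)
    have h1 : ContinuousAt (fun x : En n => k (x - y)) x₀ :=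
      ContinuousAt.comp (x := x₀) (g := k)
        (hkc _ (hne x₀ (mem_ball_self (half_pos hd)) y hy))
        ((continuous_id.sub continuous_const).continuousAt)
    exact continuousAt_const.smul h1

end Parametric

end FracAux


/-- decay of `𝔤 = (-Δ)^{s/2}u` away from `2Ω`: if `u` is bounded and
Lipschitz, `u = 0` in `Ωᶜ`, `0 ∈ Ω`, and `dist(Ω, (2Ω)ᶜ) ≥ κ > 0`, then for `x ∉ 2Ω`
one has `𝔤(x) = -c_{n,s/2}∫_Ω u(y)/|x-y|^{n+s} dy`, `𝔤` is twice continuously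
differentiable at `x`, and `|𝔤(x)| ≤ C|x|^{-n-s}`, `|∇𝔤(x)| ≤ C|x|^{-n-s-1}`,
`|D²𝔤(x)| ≤ C|x|^{-n-s-2}` with `C` independent of `x`. -/
theorem fracHalf_decay_far_away (n : ℕ) (hn : 1 ≤ n) (s : ℝ) (hs : s ∈ Set.Ioo (0:ℝ) 1)
    (Ω : Set (En n)) (hΩo : IsOpen Ω) (hΩb : IsBounded Ω) (h0 : (0 : En n) ∈ Ω)
    (κ : ℝ) (hκ : 0 < κ)
    (hsep : ∀ y ∈ Ω, ∀ x : En n, x ∉ (2 : ℝ) • Ω → κ ≤ ‖x - y‖)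
    (u : En n → ℝ) (M : ℝ) (L : ℝ≥0)
    (hM : ∀ x, |u x| ≤ M) (hL : LipschitzWith L u)
    (hzero : ∀ x ∉ Ω, u x = 0) :
    (∀ x : En n, x ∉ (2 : ℝ) • Ω →
      fracHalf n s u x = -(cK n (s / 2) * ∫ y in Ω, u y / ‖x - y‖ ^ ((n : ℝ) + s)) ∧
      ContDiffAt ℝ 2 (fracHalf n s u) x) ∧
    ∃ C : ℝ, ∀ x : En n, x ∉ (2 : ℝ) • Ω →
      |fracHalf n s u x| ≤ C * ‖x‖ ^ (-(n : ℝ) - s) ∧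
      ‖gradient (fracHalf n s u) x‖ ≤ C * ‖x‖ ^ (-(n : ℝ) - s - 1) ∧
      ‖hess n (fracHalf n s u) x‖ ≤ C * ‖x‖ ^ (-(n : ℝ) - s - 2) := by
  obtain ⟨hs0, hs1⟩ := hs
  have hΩm : MeasurableSet Ω := hΩo.measurableSet
  have hfin : volume Ω < ⊤ := hΩb.measure_lt_top
  have hu : Continuous u := hL.continuous
  have hM0 : (0:ℝ) ≤ M := le_trans (abs_nonneg _) (hM 0)
  have hp0 : (0:ℝ) < (n : ℝ) + s := add_pos_of_nonneg_of_pos (Nat.cast_nonneg n) hs0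
  set e : ℝ := -(((n : ℝ) + s) / 2) with he
  have he0 : e ≤ 0 := by rw [he]; linarith
  have h2e : 2 * e = -((n : ℝ) + s) := by rw [he]; ring
  set c : ℝ := cK n (s / 2) with hc
  have hd2 : (0:ℝ) < κ / 2 := by linarith
  -- kernel rewriting
  have hker : ∀ (a : ℝ) (z : En n), a • FracAux.sqK n e z = a / ‖z‖ ^ ((n : ℝ) + s) := by
    intro a z
    rw [smul_eq_mul, FracAux.sqK_eq, h2e, Real.rpow_neg (norm_nonneg z), div_eq_mul_inv]
  set F : En n → ℝ := fun x => ∫ y in Ω, u y • FracAux.sqK n e (x - y) with hF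
  set F₁ : En n → En n →L[ℝ] ℝ :=
    fun x => ∫ y in Ω, u y • FracAux.sqK₁ n e (x - y) with hF₁
  set F₂ : En n → En n →L[ℝ] En n →L[ℝ] ℝ :=
    fun x => ∫ y in Ω, u y • FracAux.sqK₂ n e (x - y) with hF₂
  have hFdiv : ∀ x' : En n, F x' = ∫ y in Ω, u y / ‖x' - y‖ ^ ((n : ℝ) + s) := by
    intro x'
    rw [hF]
    exact integral_congr_ae (ae_of_all _ fun y => hker (u y) (x' - y))
  -- the representation formula
  have hform : ∀ x' : En n, (∀ y ∈ Ω, κ / 2 ≤ ‖x' - y‖) →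
      fracHalf n s u x' = -(c * F x') := by
    intro x' hx'
    have hx'Ω : x' ∉ Ω := by
      intro h
      have h1 := hx' x' h
      rw [sub_self, norm_zero] at h1
      linarith
    have hux' : u x' = 0 := hzero _ hx'Ω
    have step1 : ∀ z : En n, (u x' - u (x' + z)) / ‖z‖ ^ ((n:ℝ) + s)
        = -(u (x' + z) • FracAux.sqK n e z) := by
      intro z
      rw [hux', zero_sub, neg_div, hker]
    have step2 : fracHalf n s u x' = c * ∫ z : En n, -(u (x' + z) • FracAux.sqK n e z) := by
      show cK n (s / 2) * (∫ z : En n, (u x' - u (x' + z)) / ‖z‖ ^ ((n : ℝ) + s)) = _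
      rw [← hc]
      congr 1
      exact integral_congr_ae (ae_of_all _ step1)
    have step3 : (∫ z : En n, u (x' + z) • FracAux.sqK n e z)
        = ∫ y : En n, u y • FracAux.sqK n e (y - x') := by
      have h := MeasureTheory.integral_add_left_eq_self (μ := volume)
        (fun y : En n => u y • FracAux.sqK n e (y - x')) x'
      rw [← h]
      congr 1
      funext z
      rw [add_sub_cancel_left]
    have step4 : (∫ y : En n, u y • FracAux.sqK n e (y - x'))
        = ∫ y in Ω, u y • FracAux.sqK n e (y - x') :=
      (setIntegral_eq_integral_of_forall_compl_eq_zero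
        (fun y hy => by rw [hzero y hy, zero_smul])).symm
    have step5 : (∫ y in Ω, u y • FracAux.sqK n e (y - x')) = F x' := by
      rw [hF]
      exact integral_congr_ae (ae_of_all _ fun y => by simp only [FracAux.sqK_symm])
    calc fracHalf n s u x'
        = c * ∫ z : En n, -(u (x' + z) • FracAux.sqK n e z) := step2
      _ = c * -(∫ z : En n, u (x' + z) • FracAux.sqK n e z) := by rw [integral_neg]
      _ = -(c * ∫ z : En n, u (x' + z) • FracAux.sqK n e z) := by ring
      _ = -(c * F x') := by rw [step3, step4, step5]
  -- derivatives
  have hdF : ∀ x' : En n, (∀ y ∈ Ω, κ / 2 ≤ ‖x' - y‖) → HasFDerivAt F (F₁ x') x' := by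
    intro x' hx'
    rw [hF, hF₁]
    exact FracAux.hasFDerivAt_int_kernel hΩm hfin hu hM
      (fun z hz => FracAux.hasFDerivAt_sqK e hz)
      (fun z hz => (FracAux.hasFDerivAt_sqK₁ e hz).continuousAt)
      hd2
      (Real.rpow_nonneg (by positivity) (2 * e))
      (by positivity : (0:ℝ) ≤ 2 * |e| * (κ / 2 / 2) ^ (2 * e - 1))
      (fun z hz => FracAux.norm_sqK_le e he0 (by positivity) hz)
      (fun z hz => FracAux.norm_sqK₁_le e he0 (by positivity) hz)
      hx'
  have hdF₁ : ∀ x' : En n, (∀ y ∈ Ω, κ / 2 ≤ ‖x' - y‖) → HasFDerivAt F₁ (F₂ x') x' := by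
    intro x' hx'
    rw [hF₁, hF₂]
    exact FracAux.hasFDerivAt_int_kernel hΩm hfin hu hM
      (fun z hz => FracAux.hasFDerivAt_sqK₁ e hz)
      (fun z hz => FracAux.continuousAt_sqK₂ e hz)
      hd2
      (by positivity : (0:ℝ) ≤ 2 * |e| * (κ / 2 / 2) ^ (2 * e - 1))
      (by positivity : (0:ℝ) ≤ (2 * |e| + 4 * |e| * |e - 1|) * (κ / 2 / 2) ^ (2 * e - 2))
      (fun z hz => FracAux.norm_sqK₁_le e he0 (by positivity) hz)
      (fun z hz => FracAux.norm_sqK₂_le e he0 (by positivity) hz)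
      hx'
  have hcF₂ : ∀ x' : En n, (∀ y ∈ Ω, κ / 2 ≤ ‖x' - y‖) → ContinuousAt F₂ x' := by
    intro x' hx'
    rw [hF₂]
    exact FracAux.continuousAt_int_kernel hΩm hfin hu hM
      (fun z hz => FracAux.continuousAt_sqK₂ e hz)
      hd2
      (fun z hz => FracAux.norm_sqK₂_le e he0 (by positivity) hz)
      hx'
  -- for x outside 2Ω, points of the κ/2-ball around x stay κ/2-far from Ω
  have hballx : ∀ x : En n, x ∉ (2:ℝ) • Ω → ∀ x' ∈ ball x (κ/2), ∀ y ∈ Ω,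
      κ / 2 ≤ ‖x' - y‖ := by
    intro x hx x' hx' y hy
    have h1 : κ ≤ ‖x - y‖ := hsep y hy x hx
    have h2 : dist x' x < κ / 2 := mem_ball.1 hx'
    have h3 : dist x y ≤ dist x x' + dist x' y := dist_triangle _ _ _
    rw [dist_eq_norm] at h2 h3
    rw [dist_eq_norm, dist_eq_norm] at h3
    have h4 : ‖x - x'‖ = ‖x' - x‖ := norm_sub_rev _ _
    linarith
  have hx2k : ∀ x : En n, x ∉ (2:ℝ) • Ω → ∀ y ∈ Ω, κ / 2 ≤ ‖x - y‖ := by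
    intro x hx y hy
    have := hsep y hy x hx
    linarith
  -- first part of the statement
  have hpart1 : ∀ x : En n, x ∉ (2:ℝ) • Ω →
      fracHalf n s u x = -(cK n (s / 2) * ∫ y in Ω, u y / ‖x - y‖ ^ ((n : ℝ) + s)) ∧
      ContDiffAt ℝ 2 (fracHalf n s u) x := by
    intro x hx
    have hmem : ball x (κ/2) ∈ nhds x := ball_mem_nhds x hd2
    have heq : fracHalf n s u =ᶠ[nhds x] fun x' => -(c * F x') :=
      eventually_of_mem hmem (fun x' hx' => hform x' (hballx x hx x' hx'))
    constructor
    · rw [hform x (hx2k x hx), hFdiv x, hc]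
    · have h2F : ContDiffAt ℝ ((1:ℕ) + 1) F x := by
        rw [contDiffAt_succ_iff_hasFDerivAt]
        refine ⟨F₁, ⟨ball x (κ/2), hmem, fun x' hx' => hdF x' (hballx x hx x' hx')⟩, ?_⟩
        have h1F : ContDiffAt ℝ ((0:ℕ) + 1) F₁ x := by
          rw [contDiffAt_succ_iff_hasFDerivAt]
          refine ⟨F₂, ⟨ball x (κ/2), hmem, fun x' hx' => hdF₁ x' (hballx x hx x' hx')⟩, ?_⟩
          rw [show (((0:ℕ) : ℕ) : WithTop ℕ∞) = 0 from rfl, contDiffAt_zero]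
          exact ⟨ball x (κ/2), hmem,
            fun x' hx' => (hcF₂ x' (hballx x hx x' hx')).continuousWithinAt⟩
        exact_mod_cast h1F
      have h2F' : ContDiffAt ℝ 2 F x := by exact_mod_cast h2F
      have hnice : ContDiffAt ℝ 2 (fun x' => -(c * F x')) x :=
        (contDiffAt_const.mul h2F').neg
      exact hnice.congr_of_eventuallyEq heq
  refine ⟨hpart1, ?_⟩
  -- geometric constants
  obtain ⟨R, hRsub⟩ := hΩb.subset_ball 0
  set R' : ℝ := max R 1 with hR'
  have hR'0 : (0:ℝ) < R' := lt_of_lt_of_le one_pos (le_max_right _ _)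
  have hΩR : ∀ y ∈ Ω, ‖y‖ ≤ R' := fun y hy =>
    le_trans (le_of_lt (mem_ball_zero_iff.1 (hRsub hy))) (le_max_left _ _)
  set c₀ : ℝ := min (1/2) (κ / (2 * R')) with hc₀def
  have hc₀ : 0 < c₀ := lt_min (by norm_num) (by positivity)
  have hlow : ∀ x : En n, x ∉ (2:ℝ) • Ω → ∀ y ∈ Ω, c₀ * ‖x‖ ≤ ‖x - y‖ := by
    intro x hx y hy
    rcases le_or_gt ‖x‖ (2 * R') with h | h
    · have h1 : c₀ * ‖x‖ ≤ (κ / (2 * R')) * (2 * R') :=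
        mul_le_mul (min_le_right _ _) h (norm_nonneg x) (by positivity)
      have h2 : (κ / (2 * R')) * (2 * R') = κ := div_mul_cancel₀ _ (by positivity)
      calc c₀ * ‖x‖ ≤ κ := by rw [← h2]; exact h1
        _ ≤ ‖x - y‖ := hsep y hy x hx
    · have h1 : c₀ * ‖x‖ ≤ (1/2) * ‖x‖ :=
        mul_le_mul_of_nonneg_right (min_le_left _ _) (norm_nonneg x)
      have h2 : ‖y‖ ≤ R' := hΩR y hy
      have h3 : ‖x‖ - ‖y‖ ≤ ‖x - y‖ := norm_sub_norm_le x y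
      linarith
  have hxpos : ∀ x : En n, x ∉ (2:ℝ) • Ω → 0 < ‖x‖ := by
    intro x hx
    have h1 := hsep 0 h0 x hx
    rw [sub_zero] at h1
    linarith
  set vol : ℝ := (volume Ω).toReal with hvol
  have hvol0 : 0 ≤ vol := ENNReal.toReal_nonneg
  -- the three constants
  obtain ⟨C₀, hC₀⟩ : ∃ t : ℝ, t = |c| * (M * c₀ ^ (2 * e)) * vol := ⟨_, rfl⟩
  obtain ⟨C₁, hC₁⟩ : ∃ t : ℝ, t = |c| * (M * (2 * |e| * c₀ ^ (2 * e - 1))) * vol := ⟨_, rfl⟩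
  obtain ⟨C₂, hC₂⟩ : ∃ t : ℝ, t =
      |c| * (M * ((2 * |e| + 4 * |e| * |e - 1|) * c₀ ^ (2 * e - 2))) * vol := ⟨_, rfl⟩
  have hC₀0 : 0 ≤ C₀ := by
    rw [hC₀]
    refine mul_nonneg (mul_nonneg (abs_nonneg _) (mul_nonneg hM0 ?_)) hvol0
    exact Real.rpow_nonneg hc₀.le _
  have hC₁0 : 0 ≤ C₁ := by
    rw [hC₁]
    refine mul_nonneg (mul_nonneg (abs_nonneg _) (mul_nonneg hM0 ?_)) hvol0
    exact mul_nonneg (by positivity) (Real.rpow_nonneg hc₀.le _)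
  have hC₂0 : 0 ≤ C₂ := by
    rw [hC₂]
    refine mul_nonneg (mul_nonneg (abs_nonneg _) (mul_nonneg hM0 ?_)) hvol0
    exact mul_nonneg (by positivity) (Real.rpow_nonneg hc₀.le _)
  refine ⟨C₀ + C₁ + C₂, ?_⟩
  intro x hx
  have hx0 : 0 < ‖x‖ := hxpos x hx
  have hdx0 : 0 < c₀ * ‖x‖ := by positivity
  have hlx := hlow x hx
  -- exponent bookkeeping
  have hex0 : -(n:ℝ) - s = 2 * e := by rw [h2e]; ring
  have hex1 : -(n:ℝ) - s - 1 = 2 * e - 1 := by rw [← hex0]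
  have hex2 : -(n:ℝ) - s - 2 = 2 * e - 2 := by rw [← hex0]
  have hsplit : ∀ a : ℝ, (c₀ * ‖x‖) ^ a = c₀ ^ a * ‖x‖ ^ a :=
    fun a => Real.mul_rpow hc₀.le (norm_nonneg x)
  -- bound on F
  have hFb : ‖F x‖ ≤ M * (c₀ * ‖x‖) ^ (2 * e) * vol := by
    rw [hF, hvol]
    refine norm_setIntegral_le_of_norm_le_const hfin (fun y hy => ?_)
    refine le_trans (le_of_eq (FracAux.norm_smul_abs _ _)) ?_
    exact mul_le_mul (hM y) (FracAux.norm_sqK_le e he0 hdx0 (hlx y hy)) (norm_nonneg _) hM0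
  have hF₁b : ‖F₁ x‖ ≤ M * (2 * |e| * (c₀ * ‖x‖) ^ (2 * e - 1)) * vol := by
    rw [hF₁, hvol]
    refine norm_setIntegral_le_of_norm_le_const hfin (fun y hy => ?_)
    refine le_trans (ContinuousLinearMap.opNorm_smul_le (u y) (FracAux.sqK₁ n e (x - y))) ?_
    rw [Real.norm_eq_abs]
    exact mul_le_mul (hM y) (FracAux.norm_sqK₁_le e he0 hdx0 (hlx y hy)) (norm_nonneg _) hM0
  have hF₂b : ‖F₂ x‖ ≤ M * ((2 * |e| + 4 * |e| * |e - 1|) * (c₀ * ‖x‖) ^ (2 * e - 2)) * vol := by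
    rw [hF₂, hvol]
    refine norm_setIntegral_le_of_norm_le_const hfin (fun y hy => ?_)
    refine le_trans (ContinuousLinearMap.opNorm_smul_le (u y) (FracAux.sqK₂ n e (x - y))) ?_
    rw [Real.norm_eq_abs]
    exact mul_le_mul (hM y) (FracAux.norm_sqK₂_le e he0 hdx0 (hlx y hy)) (norm_nonneg _) hM0
  have hmem : ball x (κ/2) ∈ nhds x := ball_mem_nhds x hd2
  have heq : fracHalf n s u =ᶠ[nhds x] fun x' => -(c * F x') :=
    eventually_of_mem hmem (fun x' hx' => hform x' (hballx x hx x' hx'))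
  refine ⟨?_, ?_, ?_⟩
  · -- value bound
    rw [hform x (hx2k x hx), hex0]
    calc |(-(c * F x))| = |c| * ‖F x‖ := by rw [abs_neg, abs_mul, Real.norm_eq_abs]
      _ ≤ |c| * (M * (c₀ * ‖x‖) ^ (2 * e) * vol) :=
          mul_le_mul_of_nonneg_left hFb (abs_nonneg c)
      _ = C₀ * ‖x‖ ^ (2 * e) := by rw [hsplit, hC₀]; ring
      _ ≤ (C₀ + C₁ + C₂) * ‖x‖ ^ (2 * e) :=
          mul_le_mul_of_nonneg_right (by linarith) (Real.rpow_nonneg (norm_nonneg x) _)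
  · -- gradient bound
    have hdx : HasFDerivAt (fun x' => -(c * F x')) (-(c • F₁ x)) x :=
      ((hdF x (hx2k x hx)).const_mul c).neg
    have hgrad_eq : fderiv ℝ (fracHalf n s u) x = -(c • F₁ x) := by
      rw [heq.fderiv_eq]
      exact hdx.fderiv
    have hgnorm : ‖gradient (fracHalf n s u) x‖ = ‖fderiv ℝ (fracHalf n s u) x‖ :=
      LinearIsometryEquiv.norm_map (InnerProductSpace.toDual ℝ (En n)).symm _
    rw [hgnorm, hgrad_eq, hex1, norm_neg]
    calc ‖c • F₁ x‖ ≤ |c| * ‖F₁ x‖ := by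
          refine le_trans (ContinuousLinearMap.opNorm_smul_le c (F₁ x)) ?_
          rw [Real.norm_eq_abs]
      _ ≤ |c| * (M * (2 * |e| * (c₀ * ‖x‖) ^ (2 * e - 1)) * vol) :=
          mul_le_mul_of_nonneg_left hF₁b (abs_nonneg c)
      _ = C₁ * ‖x‖ ^ (2 * e - 1) := by rw [hsplit, hC₁]; ring
      _ ≤ (C₀ + C₁ + C₂) * ‖x‖ ^ (2 * e - 1) :=
          mul_le_mul_of_nonneg_right (by linarith) (Real.rpow_nonneg (norm_nonneg x) _)
  · -- hessian bound
    have hfe : fderiv ℝ (fracHalf n s u) =ᶠ[nhds x] fun x' => -(c • F₁ x') := by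
      filter_upwards [hmem] with x' hx'
      have heq' : fracHalf n s u =ᶠ[nhds x'] fun z => -(c * F z) :=
        eventually_of_mem (isOpen_ball.mem_nhds hx') (fun z hz => hform z (hballx x hx z hz))
      rw [heq'.fderiv_eq]
      exact (((hdF x' (hballx x hx x' hx')).const_mul c).neg).fderiv
    have hhess_eq : hess n (fracHalf n s u) x = -(c • F₂ x) := by
      show fderiv ℝ (fderiv ℝ (fracHalf n s u)) x = -(c • F₂ x)
      rw [hfe.fderiv_eq]
      exact (((hdF₁ x (hx2k x hx)).const_smul c).neg).fderiv
    rw [hhess_eq, hex2]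
    calc ‖-(c • F₂ x)‖ = ‖c • F₂ x‖ := norm_neg (c • F₂ x)
      _ ≤ |c| * ‖F₂ x‖ := by
          refine le_trans (ContinuousLinearMap.opNorm_smul_le c (F₂ x)) ?_
          rw [Real.norm_eq_abs]
      _ ≤ |c| * (M * ((2 * |e| + 4 * |e| * |e - 1|) * (c₀ * ‖x‖) ^ (2 * e - 2)) * vol) :=
          mul_le_mul_of_nonneg_left hF₂b (abs_nonneg c)
      _ = C₂ * ‖x‖ ^ (2 * e - 2) := by rw [hsplit, hC₂]; ring
      _ ≤ (C₀ + C₁ + C₂) * ‖x‖ ^ (2 * e - 2) :=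
          mul_le_mul_of_nonneg_right (by linarith) (Real.rpow_nonneg (norm_nonneg x) _)
end
end
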